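/- arXiv:1201.5830 — 3 statements merged into one kernel-verified Lean document; each statement's English description precedes it below -/
import Mathlib

section
/- The linear map i satisfies ⟨i(x), i(y)⟩ = 2⟨x,y⟩_T for all x,y ∈ V_T, and it maps the ℤ-span of the basis υ⁰, g_{jk}, υ into L. Moreover, for all B_T, ω ∈ H² and all t ∈ ℝ, setting B = ½·i(B_T) + ½·B_ℤ, the following identities hold in W ⊗ ℝ: (1) i( ω − ⟨B_T,ω⟩_T·υ ) = i(ω) − ⟨B, i(ω)⟩·v̂; (2) ½·i( υ⁰ + B_T + (t − ½⟨B_T,B_T⟩_T)·υ ) = v̂⁰ + B + ( t/2 − ½⟨B,B⟩ )·v̂. (Thus the orbifold conformal field theory of a torus theory with data (ω, B_T, V_T = t) has geometric interpretation with Kähler class π_*ω, volume t/2, and B-field B = ½π_*B_T + ½B_ℤ.) -/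
noncomputable section

open scoped BigOperators

/-- `𝔽₂⁴`, the 4-dimensional vector space over the field with two elements. -/
abbrev F4 : Type := Fin 4 → ZMod 2

/-- `W_Π ⊗ ℝ`, with basis `(E_i)_{i ∈ 𝔽₂⁴}`. -/
abbrev WPiR : Type := F4 → ℝ

/-- The basis vectors `E_i`. -/
def EvecR (i : F4) : WPiR := Pi.single i 1

/-- The form on `W_Π ⊗ ℝ`: `⟨E_i,E_j⟩ = -2δ_{ij}`. -/
def formPiR : WPiR →ₗ[ℝ] WPiR →ₗ[ℝ] ℝ :=
  ∑ i : F4, (-2 : ℝ) • (LinearMap.mul ℝ ℝ).compl₁₂ (LinearMap.proj i) (LinearMap.proj i)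

/-- `W_K ⊗ ℝ`, with ordered basis `f_{12}, f_{13}, f_{14}, f_{23}, f_{24}, f_{34}`. -/
abbrev WKR : Type := Fin 6 → ℝ

/-- The basis vectors `f_{jk}`. -/
def fvecR (m : Fin 6) : WKR := Pi.single m 1

/-- Gram matrix on `W_K`: `⟨f_{12},f_{34}⟩ = 2`, `⟨f_{13},f_{24}⟩ = -2`, `⟨f_{14},f_{23}⟩ = 2`. -/
def gramKR : Fin 6 → Fin 6 → ℝ :=
  ![![0, 0, 0, 0, 0, 2], ![0, 0, 0, 0, -2, 0], ![0, 0, 0, 2, 0, 0],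
    ![0, 0, 2, 0, 0, 0], ![0, -2, 0, 0, 0, 0], ![2, 0, 0, 0, 0, 0]]

/-- The form on `W_K ⊗ ℝ`. -/
def formKR : WKR →ₗ[ℝ] WKR →ₗ[ℝ] ℝ :=
  ∑ m : Fin 6, ∑ m' : Fin 6,
    gramKR m m' • (LinearMap.mul ℝ ℝ).compl₁₂ (LinearMap.proj m) (LinearMap.proj m')

/-- `W_U ⊗ ℝ`: basis `u⁰ = (1,0)`, `u = (0,1)` with `⟨u⁰,u⁰⟩ = ⟨u,u⟩ = 0`, `⟨u⁰,u⟩ = 2`. -/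
abbrev WUR : Type := ℝ × ℝ

/-- The form on `W_U ⊗ ℝ`. -/
def formUR : WUR →ₗ[ℝ] WUR →ₗ[ℝ] ℝ :=
  (2 : ℝ) • ((LinearMap.mul ℝ ℝ).compl₁₂ (LinearMap.fst ℝ ℝ ℝ) (LinearMap.snd ℝ ℝ ℝ) +
    (LinearMap.mul ℝ ℝ).compl₁₂ (LinearMap.snd ℝ ℝ ℝ) (LinearMap.fst ℝ ℝ ℝ))

/-- `W ⊗ ℝ` where `W = W_K ⊕ W_Π ⊕ W_U` is the 24-dimensional space modelling
`H^{even}` of a Kummer surface. -/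
abbrev WR : Type := WKR × WPiR × WUR

/-- The orthogonal direct sum of the forms on the three summands of `W ⊗ ℝ`. -/
def formWR : WR →ₗ[ℝ] WR →ₗ[ℝ] ℝ :=
  formKR.compl₁₂ (LinearMap.fst ℝ WKR (WPiR × WUR)) (LinearMap.fst ℝ WKR (WPiR × WUR)) +
    formPiR.compl₁₂ ((LinearMap.fst ℝ WPiR WUR).comp (LinearMap.snd ℝ WKR (WPiR × WUR)))
      ((LinearMap.fst ℝ WPiR WUR).comp (LinearMap.snd ℝ WKR (WPiR × WUR))) +
    formUR.compl₁₂ ((LinearMap.snd ℝ WPiR WUR).comp (LinearMap.snd ℝ WKR (WPiR × WUR)))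
      ((LinearMap.snd ℝ WPiR WUR).comp (LinearMap.snd ℝ WKR (WPiR × WUR)))

/-- `u⁰ = π_*υ⁰`. -/
def u0R : WR := (0, 0, (1, 0))

/-- `u = π_*υ`. -/
def uR : WR := (0, 0, (0, 1))

/-- The classes `E_i` inside `W ⊗ ℝ`. -/
def EvecWR (i : F4) : WR := (0, EvecR i, 0)

/-- The classes `f_{jk}` inside `W ⊗ ℝ`. -/
def fvecWR (m : Fin 6) : WR := (fvecR m, 0, 0)

/-- `v̂ = u`. -/
def vhatR : WR := uR

/-- `v̂⁰ = ½u⁰ − ¼·∑_{i∈𝔽₂⁴} E_i + u`. -/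
def vhat0R : WR := ((1 : ℝ)/2) • u0R - ((1 : ℝ)/4) • (∑ i : F4, EvecWR i) + uR

/-- `Ê_i = E_i − ½u`. -/
def EhatR (i : F4) : WR := EvecWR i - ((1 : ℝ)/2) • uR

/-- The pair `(j,k)` (with `j < k`) corresponding to the index `m : Fin 6`. -/
def pairIdx : Fin 6 → Fin 4 × Fin 4 := ![(0, 1), (0, 2), (0, 3), (1, 2), (1, 3), (2, 3)]

open scoped Classical in
/-- `P_{jk} = {a ∈ 𝔽₂⁴ : a_l = 0 for all l ∉ {j,k}}` as a finite set. -/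
def Pfin (m : Fin 6) : Finset F4 :=
  Finset.univ.filter fun a => ∀ l : Fin 4, l ≠ (pairIdx m).1 → l ≠ (pairIdx m).2 → a l = 0

/-- The generators `½ f_{jk} + ½·∑_{i ∈ P_{jk}} Ê_{i+l}`. -/
def genJKR (m : Fin 6) (l : F4) : WR :=
  ((1 : ℝ)/2) • fvecWR m + ((1 : ℝ)/2) • ∑ i ∈ Pfin m, EhatR (i + l)

/-- The lattice `L ⊆ W ⊗ ℝ` generated by `v̂`, `v̂⁰`, the sixteen `Ê_i` and the
`½ f_{jk} + ½·∑_{i ∈ P_{jk}} Ê_{i+l}`. -/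
def LR : Submodule ℤ WR :=
  Submodule.span ℤ
    ({vhatR, vhat0R} ∪ Set.range EhatR ∪ {x | ∃ (m : Fin 6) (l : F4), x = genJKR m l})

/-- `V_T = H^{even}(T,ℝ)`, with coordinates `(a, g, c)` standing for
`a·υ⁰ + ∑ g_m·g_{jk(m)} + c·υ`. -/
abbrev VT : Type := ℝ × (Fin 6 → ℝ) × ℝ

/-- `υ⁰ ∈ V_T`. -/
def up0T : VT := (1, 0, 0)

/-- `υ ∈ V_T`. -/
def upT : VT := (0, 0, 1)

/-- The basis vectors `g_{jk}` of `H² ⊆ V_T`. -/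
def gvecT (m : Fin 6) : VT := (0, Pi.single m 1, 0)

/-- The generic element `∑ g_m·g_{jk(m)}` of `H² = span_ℝ{g_{jk}} ⊆ V_T`. -/
def H2vec (g : Fin 6 → ℝ) : VT := (0, g, 0)

/-- The intersection form `⟨·,·⟩_T` on `V_T`: `⟨υ⁰,υ⟩_T = 1`, `⟨g_{12},g_{34}⟩_T = 1`,
`⟨g_{13},g_{24}⟩_T = −1`, `⟨g_{14},g_{23}⟩_T = 1`, all other pairings `0`. -/
def formT : VT →ₗ[ℝ] VT →ₗ[ℝ] ℝ :=
  (LinearMap.mul ℝ ℝ).compl₁₂ (LinearMap.fst ℝ ℝ ((Fin 6 → ℝ) × ℝ))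
      ((LinearMap.snd ℝ (Fin 6 → ℝ) ℝ).comp (LinearMap.snd ℝ ℝ ((Fin 6 → ℝ) × ℝ))) +
    (LinearMap.mul ℝ ℝ).compl₁₂
      ((LinearMap.snd ℝ (Fin 6 → ℝ) ℝ).comp (LinearMap.snd ℝ ℝ ((Fin 6 → ℝ) × ℝ)))
      (LinearMap.fst ℝ ℝ ((Fin 6 → ℝ) × ℝ)) +
    ∑ m : Fin 6, ∑ m' : Fin 6, (gramKR m m' / 2) •
      (LinearMap.mul ℝ ℝ).compl₁₂
        ((LinearMap.proj m).comp ((LinearMap.fst ℝ (Fin 6 → ℝ) ℝ).comp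
          (LinearMap.snd ℝ ℝ ((Fin 6 → ℝ) × ℝ))))
        ((LinearMap.proj m').comp ((LinearMap.fst ℝ (Fin 6 → ℝ) ℝ).comp
          (LinearMap.snd ℝ ℝ ((Fin 6 → ℝ) × ℝ))))

/-- The map `i : V_T → W ⊗ ℝ` with `i(υ⁰) = u⁰`, `i(g_{jk}) = f_{jk}`, `i(υ) = u`
(modelling `π_*`). -/
def iT : VT →ₗ[ℝ] WR :=
  LinearMap.prod
    ((LinearMap.fst ℝ (Fin 6 → ℝ) ℝ).comp (LinearMap.snd ℝ ℝ ((Fin 6 → ℝ) × ℝ)))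
    (LinearMap.prod (0 : VT →ₗ[ℝ] WPiR)
      (LinearMap.prod (LinearMap.fst ℝ ℝ ((Fin 6 → ℝ) × ℝ))
        ((LinearMap.snd ℝ (Fin 6 → ℝ) ℝ).comp (LinearMap.snd ℝ ℝ ((Fin 6 → ℝ) × ℝ)))))

/-- `B_ℤ = ½·∑_{i∈𝔽₂⁴} Ê_i ∈ W ⊗ ℝ`. -/
def BzedR : WR := ((1 : ℝ)/2) • ∑ i : F4, EhatR i

section helpers

lemma formWR_apply (x y : WR) :
    formWR x y = (∑ m : Fin 6, ∑ m' : Fin 6, gramKR m m' * (x.1 m * y.1 m'))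
      + (∑ i : F4, (-2 : ℝ) * (x.2.1 i * y.2.1 i))
      + 2 * (x.2.2.1 * y.2.2.2 + x.2.2.2 * y.2.2.1) := by
  simp [formWR, formKR, formPiR, formUR, LinearMap.compl₁₂_apply, LinearMap.sum_apply,
    LinearMap.smul_apply, LinearMap.mul_apply', mul_add, smul_eq_mul]

lemma formT_apply (x y : VT) :
    formT x y = x.1 * y.2.2 + x.2.2 * y.1
      + ∑ m : Fin 6, ∑ m' : Fin 6, (gramKR m m' / 2) * (x.2.1 m * y.2.1 m') := by
  simp [formT, LinearMap.compl₁₂_apply, LinearMap.sum_apply,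
    LinearMap.smul_apply, LinearMap.mul_apply', smul_eq_mul]

lemma iT_apply (x : VT) : iT x = (x.2.1, 0, (x.1, x.2.2)) := by
  simp [iT]

lemma sumEvec : ∑ i : F4, EvecWR i = ((0 : WKR), (fun _ => (1:ℝ)), ((0:ℝ), (0:ℝ))) := by
  unfold EvecWR
  ext <;> simp [EvecR, Prod.fst_sum, Prod.snd_sum, Finset.sum_pi_single, Finset.sum_apply]

lemma cardF4 : (Finset.univ : Finset F4).card = 16 := by decide

lemma sumEhat : ∑ i : F4, EhatR i = ((0 : WKR), (fun _ => (1:ℝ)), ((0:ℝ), (-8:ℝ))) := by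
  have h : ∑ i : F4, EhatR i = (∑ i : F4, EvecWR i) - (16 : ℕ) • (((1 : ℝ)/2) • uR) := by
    unfold EhatR
    rw [Finset.sum_sub_distrib, Finset.sum_const, cardF4]
  rw [h, sumEvec]
  simp only [uR, Prod.smul_mk, smul_zero, Prod.mk_sub_mk, Prod.ext_iff]
  refine ⟨sub_zero 0, sub_zero _, sub_zero 0, ?_⟩
  norm_num

lemma Bzed_eq : BzedR = ((0 : WKR), (fun _ => (1/2:ℝ)), ((0:ℝ), (-4:ℝ))) := by
  unfold BzedR
  rw [sumEhat]
  simp only [Prod.smul_mk, smul_zero, Prod.ext_iff]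
  refine ⟨by trivial, ?_, by trivial, by norm_num⟩
  funext j
  norm_num

lemma part1 (x y : VT) : formWR (iT x) (iT y) = 2 * formT x y := by
  rw [iT_apply, iT_apply, formWR_apply, formT_apply]
  simp [Fin.sum_univ_six, gramKR]
  ring

end helpers

section membership

lemma mem_vhat : vhatR ∈ LR :=
  Submodule.subset_span (Or.inl (Or.inl (Set.mem_insert _ _)))

lemma mem_vhat0 : vhat0R ∈ LR :=
  Submodule.subset_span (Or.inl (Or.inl (Set.mem_insert_of_mem _ rfl)))

lemma mem_Ehat (i : F4) : EhatR i ∈ LR :=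
  Submodule.subset_span (Or.inl (Or.inr ⟨i, rfl⟩))

lemma mem_gen (m : Fin 6) (l : F4) : genJKR m l ∈ LR :=
  Submodule.subset_span (Or.inr ⟨m, l, rfl⟩)

lemma fvec_eq (m : Fin 6) :
    fvecWR m = (2:ℤ) • genJKR m 0 - ∑ i ∈ Pfin m, EhatR (i + 0) := by
  unfold genJKR
  simp only [add_zero]
  module

lemma mem_fvec (m : Fin 6) : fvecWR m ∈ LR := by
  rw [fvec_eq m]
  exact sub_mem (Submodule.smul_mem _ _ (mem_gen m 0))
    (Submodule.sum_mem _ fun i _ => mem_Ehat _)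

lemma mem_Pfin (m : Fin 6) (a : F4) :
    a ∈ Pfin m ↔ ∀ l : Fin 4, l ≠ (pairIdx m).1 → l ≠ (pairIdx m).2 → a l = 0 := by
  simp [Pfin]

lemma pairIdx0 : pairIdx 0 = (0, 1) := rfl

lemma pairIdx5 : pairIdx 5 = (2, 3) := rfl

def p01 (a : F4) : F4 := fun l => if l = 0 ∨ l = 1 then a l else 0

def p23 (a : F4) : F4 := fun l => if l = 2 ∨ l = 3 then a l else 0

lemma cardP5 : (Pfin 5).card = 4 := by
  have h : Pfin 5 = Finset.univ.filter
      (fun a : F4 => ∀ l : Fin 4, l ≠ (2 : Fin 4) → l ≠ (3 : Fin 4) → a l = 0) := by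
    ext a
    simp [Pfin, pairIdx5]
    exact Finset.mem_filter.trans (by simp)
  rw [h]
  decide

lemma sum_shift (v : F4 → WR) :
    ∑ l ∈ Pfin 5, ∑ i ∈ Pfin 0, v (i + l) = ∑ j : F4, v j := by
  rw [← Finset.sum_product']
  refine Finset.sum_nbij' (fun x => x.2 + x.1) (fun a => (p23 a, p01 a)) ?_ ?_ ?_ ?_ ?_
  · intro a _; exact Finset.mem_univ _
  · intro a _
    rw [Finset.mem_product, mem_Pfin, mem_Pfin, pairIdx0, pairIdx5]
    constructor
    · intro l h2 h3
      fin_cases l <;> simp_all [p23]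
    · intro l h0 h1
      fin_cases l <;> simp_all [p01]
  · intro x hx
    rw [Finset.mem_product, mem_Pfin, mem_Pfin, pairIdx0, pairIdx5] at hx
    obtain ⟨h1, h2⟩ := hx
    have e10 : x.1 0 = 0 := h1 0 (by decide) (by decide)
    have e11 : x.1 1 = 0 := h1 1 (by decide) (by decide)
    have e22 : x.2 2 = 0 := h2 2 (by decide) (by decide)
    have e23 : x.2 3 = 0 := h2 3 (by decide) (by decide)
    have : p23 (x.2 + x.1) = x.1 := by
      funext l; fin_cases l <;> simp [p23, e10, e11, e22, e23]
    have h2' : p01 (x.2 + x.1) = x.2 := by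
      funext l; fin_cases l <;> simp [p01, e10, e11, e22, e23]
    rw [Prod.ext_iff]; exact ⟨this, h2'⟩
  · intro a _
    funext l; fin_cases l <;> simp [p01, p23]
  · intro x _; rfl

lemma mem_Bzed : BzedR ∈ LR := by
  have hs : ∑ l ∈ Pfin 5, genJKR 0 l
      = (4 : ℕ) • (((1:ℝ)/2) • fvecWR 0) + ((1:ℝ)/2) • ∑ j : F4, EhatR j := by
    unfold genJKR
    rw [Finset.sum_add_distrib, Finset.sum_const, cardP5, ← Finset.smul_sum,
      sum_shift (fun j => EhatR j)]
  have h : BzedR = (∑ l ∈ Pfin 5, genJKR 0 l) - (2:ℤ) • fvecWR 0 := by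
    rw [hs]; unfold BzedR; module
  rw [h]
  exact sub_mem (Submodule.sum_mem _ fun l _ => mem_gen 0 l)
    (Submodule.smul_mem _ _ (mem_fvec 0))

lemma mem_u0 : u0R ∈ LR := by
  have hAB : ((0 : WKR), (fun _ => (1:ℝ)), ((0:ℝ), (-8:ℝ)))
      = (((0 : WKR), (fun _ => (1:ℝ)), ((0:ℝ), (0:ℝ))) : WR) - (8:ℝ) • uR := by
    simp only [uR, Prod.smul_mk, smul_zero, Prod.mk_sub_mk, Prod.ext_iff]
    refine ⟨(sub_zero 0).symm, (sub_zero _).symm, (sub_zero 0).symm, by norm_num⟩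
  have h : u0R = (2:ℤ) • vhat0R + BzedR + (2:ℤ) • vhatR := by
    unfold vhat0R vhatR BzedR
    rw [sumEvec, sumEhat, hAB]
    module
  rw [h]
  exact add_mem (add_mem (Submodule.smul_mem _ _ mem_vhat0) mem_Bzed)
    (Submodule.smul_mem _ _ mem_vhat)

end membership

section final

lemma iT_up0 : iT up0T = u0R := by rw [iT_apply]; rfl

lemma iT_up : iT upT = vhatR := by rw [iT_apply]; rfl

lemma iT_gvec (m : Fin 6) : iT (gvecT m) = fvecWR m := by rw [iT_apply]; rfl

lemma iT_H2 (g : Fin 6 → ℝ) : iT (H2vec g) = (g, 0, ((0:ℝ), (0:ℝ))) := by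
  rw [iT_apply]; rfl

lemma part2 : ∀ x ∈ Submodule.span ℤ ({up0T, upT} ∪ Set.range gvecT : Set VT),
    iT x ∈ LR := by
  intro x hx
  have hle : Submodule.span ℤ ({up0T, upT} ∪ Set.range gvecT : Set VT)
      ≤ LR.comap ((iT : VT →ₗ[ℝ] WR).restrictScalars ℤ) := by
    rw [Submodule.span_le]
    rintro y (h | ⟨m, rfl⟩)
    · rcases h with rfl | rfl
      · simpa [Submodule.mem_comap, iT_up0] using mem_u0
      · simpa [Submodule.mem_comap, iT_up] using mem_vhat
    · simpa [Submodule.mem_comap, iT_gvec] using mem_fvec m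
  exact hle hx

lemma vhat0_eq : vhat0R = ((0 : WKR), (fun _ => -(1/4:ℝ)), ((1/2:ℝ), (1:ℝ))) := by
  unfold vhat0R u0R uR
  rw [sumEvec]
  simp only [Prod.smul_mk, smul_zero, Prod.mk_add_mk, Prod.mk_sub_mk, Prod.ext_iff]
  refine ⟨by simp, by funext i; norm_num, by norm_num, by norm_num⟩

lemma B_eq (Bg : Fin 6 → ℝ) :
    ((1 : ℝ)/2) • iT (H2vec Bg) + ((1 : ℝ)/2) • BzedR
      = ((fun m => Bg m / 2), (fun _ => (1/4:ℝ)), ((0:ℝ), (-2:ℝ))) := by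
  rw [iT_H2, Bzed_eq]
  simp only [Prod.smul_mk, smul_zero, Prod.mk_add_mk, Prod.ext_iff]
  refine ⟨by funext m; simp; ring, by funext i; norm_num, by norm_num, by norm_num⟩

lemma fB_eq (Bg ωg : Fin 6 → ℝ) :
    formWR (((fun m => Bg m / 2), (fun _ => (1/4:ℝ)), ((0:ℝ), (-2:ℝ))) : WR)
        (iT (H2vec ωg))
      = formT (H2vec Bg) (H2vec ωg) := by
  rw [iT_H2, formWR_apply, formT_apply]
  simp [H2vec, Fin.sum_univ_six, gramKR]
  ring

lemma fBB_eq (Bg : Fin 6 → ℝ) :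
    formWR (((fun m => Bg m / 2), (fun _ => (1/4:ℝ)), ((0:ℝ), (-2:ℝ))) : WR)
        (((fun m => Bg m / 2), (fun _ => (1/4:ℝ)), ((0:ℝ), (-2:ℝ))) : WR)
      = (1/2) * formT (H2vec Bg) (H2vec Bg) - 2 := by
  rw [formWR_apply, formT_apply]
  have hc : ∑ i : F4, (-2 : ℝ) * ((1/4) * (1/4)) = -2 := by
    rw [Finset.sum_const, cardF4]
    norm_num
  rw [hc]
  simp [H2vec, Fin.sum_univ_six, gramKR]
  ring

end final

/-- The map `i` satisfies `⟨i(x),i(y)⟩ = 2⟨x,y⟩_T`, maps the ℤ-span of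
the basis `υ⁰, g_{jk}, υ` into `L`, and, setting `B = ½·i(B_T) + ½·B_ℤ`, satisfies the
two identities
`i(ω − ⟨B_T,ω⟩_T·υ) = i(ω) − ⟨B,i(ω)⟩·v̂` and
`½·i(υ⁰ + B_T + (t − ½⟨B_T,B_T⟩_T)·υ) = v̂⁰ + B + (t/2 − ½⟨B,B⟩)·v̂`
for all `B_T, ω ∈ H²` and `t ∈ ℝ`. -/
theorem stmt7 :
    (∀ x y : VT, formWR (iT x) (iT y) = 2 * formT x y) ∧
    (∀ x ∈ Submodule.span ℤ ({up0T, upT} ∪ Set.range gvecT : Set VT), iT x ∈ LR) ∧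
    (∀ Bg ωg : Fin 6 → ℝ, ∀ t : ℝ,
      ∀ BT ω : VT, BT = H2vec Bg → ω = H2vec ωg →
      ∀ B : WR, B = ((1 : ℝ)/2) • iT BT + ((1 : ℝ)/2) • BzedR →
      iT (ω - (formT BT ω) • upT) = iT ω - (formWR B (iT ω)) • vhatR ∧
      ((1 : ℝ)/2) • iT (up0T + BT + (t - (1/2 : ℝ) * formT BT BT) • upT) =
        vhat0R + B + (t/2 - (1/2 : ℝ) * formWR B B) • vhatR) := by
  refine ⟨part1, part2, ?_⟩
  intro Bg ωg t BT ω hBT hω B hB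
  subst hBT; subst hω
  have hBe : B = ((fun m => Bg m / 2), (fun _ => (1/4:ℝ)), ((0:ℝ), (-2:ℝ))) :=
    hB.trans (B_eq Bg)
  constructor
  · rw [map_sub, map_smul, iT_up, hBe, fB_eq]
  · rw [map_add, map_add, map_smul, iT_up0, iT_H2, iT_up]
    rw [hBe, fBB_eq, vhat0_eq]
    unfold u0R vhatR uR
    simp only [Prod.smul_mk, smul_zero, Prod.mk_add_mk, Prod.ext_iff, smul_eq_mul]
    refine ⟨by funext m; simp; ring, by funext i; norm_num, by norm_num, by ring⟩
end
end

section
/- P(V) is an open subset of V ⊗ ℂ with exactly two connected components, and complex conjugation x + iy ↦ x − iy maps each component homeomorphically onto the other. -/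
theorem joinedIn_segment {X : Type*} [TopologicalSpace X] {U : Set X}
    (γ : ℝ → X) (hγ : Continuous γ)
    (hmem : ∀ t, t ∈ Set.Icc (0:ℝ) 1 → γ t ∈ U) : JoinedIn U (γ 0) (γ 1) :=
  ⟨{ toFun := fun t => γ t,
     continuous_toFun := hγ.comp continuous_subtype_val,
     source' := by simp,
     target' := by simp },
   fun t => hmem t ⟨t.2.1, t.2.2⟩⟩

noncomputable section

def glSet : Set ((ℝ × ℝ) × (ℝ × ℝ)) :=
  {w | 0 < w.1.1 * w.2.2 - w.1.2 * w.2.1}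

theorem sq_sum_pos {u₁ u₂ v₁ v₂ : ℝ} (hw : 0 < u₁ * v₂ - u₂ * v₁) :
    0 < u₁^2 + u₂^2 := by
  rcases eq_or_ne u₁ 0 with h1 | h1
  · rcases eq_or_ne u₂ 0 with h2 | h2
    · rw [h1, h2] at hw; simp at hw
    · positivity
  · positivity

set_option maxHeartbeats 1000000 in
theorem sq_sum_pos' {u₁ u₂ v₁ v₂ : ℝ} (hw : 0 < u₁ * v₂ - u₂ * v₁) :
    0 < v₁^2 + v₂^2 :=
  sq_sum_pos (u₁ := v₁) (u₂ := v₂) (v₁ := -u₁) (v₂ := -u₂) (by nlinarith)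

theorem gl2_joined (w : (ℝ × ℝ) × (ℝ × ℝ)) (hw : w ∈ glSet) :
    JoinedIn glSet w ((1, 0), (0, 1)) := by
  obtain ⟨⟨u₁, u₂⟩, v₁, v₂⟩ := w
  simp only [glSet, Set.mem_setOf_eq] at hw
  have hu : 0 < u₁^2 + u₂^2 := sq_sum_pos hw
  set nu := u₁^2 + u₂^2 with hnu
  set α : ℝ := (u₁ * v₁ + u₂ * v₂) / nu with hα
  -- Segment 1 : Gram-Schmidt
  have hseg1 : JoinedIn glSet ((u₁, u₂), (v₁, v₂))
      ((u₁, u₂), (v₁ - α * u₁, v₂ - α * u₂)) := by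
    have h := joinedIn_segment (U := glSet)
      (fun t => ((u₁, u₂), (v₁ - t * α * u₁, v₂ - t * α * u₂)))
      (by fun_prop) (fun t ht => by
        simp only [glSet, Set.mem_setOf_eq]
        have : u₁ * (v₂ - t * α * u₂) - u₂ * (v₁ - t * α * u₁)
            = u₁ * v₂ - u₂ * v₁ := by ring
        rw [this]; exact hw)
    norm_num at h
    exact h
  set a₁ := v₁ - α * u₁ with ha₁
  set a₂ := v₂ - α * u₂ with ha₂
  have horth : u₁ * a₁ + u₂ * a₂ = 0 := by
    rw [ha₁, ha₂, hα]
    field_simp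
    ring
  have hd' : u₁ * a₂ - u₂ * a₁ = u₁ * v₂ - u₂ * v₁ := by rw [ha₁, ha₂]; ring
  have hw' : 0 < u₁ * a₂ - u₂ * a₁ := by rw [hd']; exact hw
  have hv : 0 < a₁^2 + a₂^2 := sq_sum_pos' hw'
  set s : ℝ := Real.sqrt nu with hs
  set s' : ℝ := Real.sqrt (a₁^2 + a₂^2) with hs'
  have hspos : 0 < s := Real.sqrt_pos.2 hu
  have hs'pos : 0 < s' := Real.sqrt_pos.2 hv
  have hssq : s^2 = nu := Real.sq_sqrt hu.le
  have hs'sq : s'^2 = a₁^2 + a₂^2 := Real.sq_sqrt hv.le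
  -- Segment 2 : rescale both vectors to unit length
  have hlam : ∀ t ∈ Set.Icc (0:ℝ) 1, ∀ c : ℝ, 0 < c → 0 < (1 - t) + t / c := by
    intro t ht c hc
    rcases lt_or_eq_of_le ht.1 with h | h
    · have : 0 ≤ 1 - t := by linarith [ht.2]
      positivity
    · rw [← h]; norm_num
  have hseg2 : JoinedIn glSet ((u₁, u₂), (a₁, a₂))
      ((u₁/s, u₂/s), (a₁/s', a₂/s')) := by
    have h := joinedIn_segment (U := glSet)
      (fun t => ((((1-t) + t/s) * u₁, ((1-t) + t/s) * u₂),
                 (((1-t) + t/s') * a₁, ((1-t) + t/s') * a₂)))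
      (by fun_prop) (fun t ht => by
        simp only [glSet, Set.mem_setOf_eq]
        have e : ((1-t) + t/s) * u₁ * (((1-t) + t/s') * a₂)
            - ((1-t) + t/s) * u₂ * (((1-t) + t/s') * a₁)
            = (((1-t) + t/s) * ((1-t) + t/s')) * (u₁ * a₂ - u₂ * a₁) := by ring
        rw [e]
        exact mul_pos (mul_pos (hlam t ht s hspos) (hlam t ht s' hs'pos)) hw')
    norm_num at h
    convert h using 2 <;> ring
  -- now unit orthogonal pair
  set b₁ := u₁ / s with hb₁
  set b₂ := u₂ / s with hb₂
  set c₁ := a₁ / s' with hc₁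
  set c₂ := a₂ / s' with hc₂
  have hbnorm : b₁^2 + b₂^2 = 1 := by
    rw [hb₁, hb₂]; field_simp; linarith [hssq, hnu]
  have hcnorm : c₁^2 + c₂^2 = 1 := by
    rw [hc₁, hc₂]; field_simp; linarith [hs'sq]
  have hbc : b₁ * c₁ + b₂ * c₂ = 0 := by
    rw [hb₁, hb₂, hc₁, hc₂]; field_simp; simpa using horth
  have hk : 0 < b₁ * c₂ - b₂ * c₁ := by
    rw [hb₁, hb₂, hc₁, hc₂]
    rw [div_mul_div_comm, div_mul_div_comm, div_sub_div_same]
    positivity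
  -- identify (c₁,c₂) = (-b₂, b₁)
  clear_value nu α a₁ a₂ s s' b₁ b₂ c₁ c₂
  have hc2e : c₂ = (b₁ * c₂ - b₂ * c₁) * b₁ := by linear_combination b₂ * hbc - c₂ * hbnorm
  have hc1e : c₁ = -((b₁ * c₂ - b₂ * c₁) * b₂) := by linear_combination b₁ * hbc - c₁ * hbnorm
  have hk2 : (b₁ * c₂ - b₂ * c₁)^2 = 1 := by
    linear_combination hcnorm - (c₁ - (b₁ * c₂ - b₂ * c₁)*b₂) * hc1e
      - (c₂ + (b₁ * c₂ - b₂ * c₁)*b₁) * hc2e - (b₁ * c₂ - b₂ * c₁)^2 * hbnorm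
  have hkone : b₁ * c₂ - b₂ * c₁ = 1 := by
    have h0 : (b₁ * c₂ - b₂ * c₁ - 1) * (b₁ * c₂ - b₂ * c₁ + 1) = 0 := by
      linear_combination hk2
    rcases mul_eq_zero.1 h0 with h | h
    · linarith
    · linarith
  have hc2 : c₂ = b₁ := by rw [hc2e, hkone]; ring
  have hc1 : c₁ = -b₂ := by rw [hc1e, hkone]; ring
  -- Segment 3 : rotation
  set z : ℂ := ⟨b₁, b₂⟩ with hz
  have hzne : z ≠ 0 := by
    intro h
    rw [Complex.ext_iff] at h
    simp [hz] at h
    rw [h.1, h.2] at hbnorm; norm_num at hbnorm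
  have habs : ‖z‖ = 1 := by
    rw [Complex.norm_def, Complex.normSq_mk]
    rw [show b₁ * b₁ + b₂ * b₂ = 1 by linear_combination hbnorm]
    exact Real.sqrt_one
  clear_value z
  set θ := Complex.arg z with hθ
  have hcos : Real.cos θ = b₁ := by
    rw [hθ, Complex.cos_arg hzne, habs]; simp [hz]
  have hsin : Real.sin θ = b₂ := by
    rw [hθ, Complex.sin_arg, habs]; simp [hz]
  have hseg3 : JoinedIn glSet ((b₁, b₂), (c₁, c₂)) ((1, 0), (0, 1)) := by
    have h := joinedIn_segment (U := glSet)
      (fun t => ((Real.cos ((1-t)*θ), Real.sin ((1-t)*θ)),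
                 (-Real.sin ((1-t)*θ), Real.cos ((1-t)*θ))))
      (by fun_prop) (fun t ht => by
        simp only [glSet, Set.mem_setOf_eq]
        have e : Real.cos ((1-t)*θ) * Real.cos ((1-t)*θ)
            - Real.sin ((1-t)*θ) * (-Real.sin ((1-t)*θ))
            = Real.sin ((1-t)*θ)^2 + Real.cos ((1-t)*θ)^2 := by ring
        rw [e, Real.sin_sq_add_cos_sq]; norm_num)
    norm_num at h
    rw [hcos, hsin] at h
    rw [hc1, hc2]
    exact h
  exact (hseg1.trans hseg2).trans hseg3

section vspace

set_option linter.unusedSectionVars false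

variable {V : Type*} [NormedAddCommGroup V] [NormedSpace ℝ V] [FiniteDimensional ℝ V]
  {n : ℕ} (form : V →ₗ[ℝ] V →ₗ[ℝ] ℝ) (b : Module.Basis (Fin 2 ⊕ Fin n) ℝ V)

theorem form_basis_right (horth : ∀ i j, i ≠ j → form (b i) (b j) = 0)
    (i : Fin 2 ⊕ Fin n) (w : V) :
    form (b i) w = b.repr w i * form (b i) (b i) := by
  conv_lhs => rw [← b.sum_repr w]
  rw [map_sum]
  rw [Finset.sum_eq_single i]
  · rw [map_smul, smul_eq_mul]
  · intro k _ hk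
    rw [map_smul, smul_eq_mul, horth i k (Ne.symm hk), mul_zero]
  · simp

theorem form_expand (horth : ∀ i j, i ≠ j → form (b i) (b j) = 0) (v w : V) :
    form v w = ∑ i, b.repr v i * (b.repr w i * form (b i) (b i)) := by
  conv_lhs => rw [← b.sum_repr v]
  rw [map_sum, LinearMap.sum_apply]
  refine Finset.sum_congr rfl fun i _ => ?_
  rw [map_smul, LinearMap.smul_apply, smul_eq_mul, form_basis_right form b horth]

theorem form_nonpos (horth : ∀ i j, i ≠ j → form (b i) (b j) = 0)
    (hneg : ∀ j : Fin n, form (b (Sum.inr j)) (b (Sum.inr j)) < 0)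
    (v : V) (h0 : b.repr v (Sum.inl 0) = 0) (h1 : b.repr v (Sum.inl 1) = 0) :
    form v v ≤ 0 := by
  rw [form_expand form b horth]
  rw [Fintype.sum_sum_type]
  have h : ∑ i : Fin 2, b.repr v (Sum.inl i) * (b.repr v (Sum.inl i) *
      form (b (Sum.inl i)) (b (Sum.inl i))) = 0 := by
    rw [Fin.sum_univ_two, h0, h1]; ring
  rw [h, zero_add]
  apply Finset.sum_nonpos
  intro j _
  nlinarith [hneg j, sq_nonneg (b.repr v (Sum.inr j))]

/-- projection onto the positive-definite coordinate plane -/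
noncomputable def proj (v : V) : V :=
  b.repr v (Sum.inl 0) • b (Sum.inl 0) + b.repr v (Sum.inl 1) • b (Sum.inl 1)

noncomputable def negpart (v : V) : V := v - proj b v

theorem repr_proj (v : V) (i : Fin 2) :
    b.repr (proj b v) (Sum.inl i) = b.repr v (Sum.inl i) := by
  unfold proj
  fin_cases i <;>
    simp [map_add, map_smul, Module.Basis.repr_self, Finsupp.single_apply]

theorem repr_negpart (v : V) (i : Fin 2) :
    b.repr (negpart b v) (Sum.inl i) = 0 := by
  simp [negpart, map_sub, repr_proj]

theorem decomp' (v : V) : proj b v + negpart b v = v := by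
  unfold negpart; abel

theorem form_proj_negpart (horth : ∀ i j, i ≠ j → form (b i) (b j) = 0)
    (v w : V) : form (proj b v) (negpart b w) = 0 := by
  have h0 : form (b (Sum.inl 0)) (negpart b w) = 0 := by
    rw [form_basis_right form b horth, repr_negpart b w 0, zero_mul]
  have h1 : form (b (Sum.inl 1)) (negpart b w) = 0 := by
    rw [form_basis_right form b horth, repr_negpart b w 1, zero_mul]
  unfold proj
  simp only [map_add, map_smul, LinearMap.add_apply, LinearMap.smul_apply,
    smul_eq_mul, h0, h1]
  ring

theorem form_negpart_proj (hsymm : ∀ x y : V, form x y = form y x)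
    (horth : ∀ i j, i ≠ j → form (b i) (b j) = 0)
    (v w : V) : form (negpart b v) (proj b w) = 0 := by
  rw [hsymm]; exact form_proj_negpart form b horth w v

theorem form_split (hsymm : ∀ x y : V, form x y = form y x)
    (horth : ∀ i j, i ≠ j → form (b i) (b j) = 0)
    (v w : V) (s : ℝ) :
    form (proj b v + s • negpart b v) (proj b w + s • negpart b w)
      = form (proj b v) (proj b w) + s^2 * form (negpart b v) (negpart b w) := by
  simp only [map_add, map_smul, LinearMap.add_apply, LinearMap.smul_apply, smul_eq_mul,
    form_proj_negpart form b horth, form_negpart_proj form b hsymm horth]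
  ring

theorem form_decomp (hsymm : ∀ x y : V, form x y = form y x)
    (horth : ∀ i j, i ≠ j → form (b i) (b j) = 0) (v w : V) :
    form v w = form (proj b v) (proj b w) + form (negpart b v) (negpart b w) := by
  conv_lhs => rw [← decomp' b v, ← decomp' b w,
    show (negpart b v : V) = (1:ℝ) • negpart b v from (one_smul ℝ _).symm,
    show (negpart b w : V) = (1:ℝ) • negpart b w from (one_smul ℝ _).symm]
  rw [form_split form b hsymm horth]
  norm_num

theorem cs_neg (hsymm : ∀ x y : V, form x y = form y x)
    (horth : ∀ i j, i ≠ j → form (b i) (b j) = 0)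
    (hneg : ∀ j : Fin n, form (b (Sum.inr j)) (b (Sum.inr j)) < 0)
    (v w : V) :
    (form (negpart b v) (negpart b w))^2
      ≤ form (negpart b v) (negpart b v) * form (negpart b w) (negpart b w) := by
  have hq : ∀ t : ℝ,
      0 ≤ (-(form (negpart b w) (negpart b w))) * (t*t)
        + (-(2 * form (negpart b v) (negpart b w))) * t
        + (-(form (negpart b v) (negpart b v))) := by
    intro t
    have hm0 : b.repr (negpart b v + t • negpart b w) (Sum.inl 0) = 0 := by
      simp [map_add, map_smul, repr_negpart]
    have hm1 : b.repr (negpart b v + t • negpart b w) (Sum.inl 1) = 0 := by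
      simp [map_add, map_smul, repr_negpart]
    have h := form_nonpos form b horth hneg _ hm0 hm1
    have hexp : form (negpart b v + t • negpart b w) (negpart b v + t • negpart b w)
        = form (negpart b v) (negpart b v) + 2*t*form (negpart b v) (negpart b w)
          + t*t*form (negpart b w) (negpart b w) := by
      simp only [map_add, map_smul, LinearMap.add_apply, LinearMap.smul_apply, smul_eq_mul]
      rw [hsymm (negpart b w) (negpart b v)]
      ring
    rw [hexp] at h
    linarith
  have hd := discrim_le_zero hq
  rw [discrim] at hd
  nlinarith [hd]

end vspace
section vspace2

set_option linter.unusedSectionVars false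

variable {V : Type*} [NormedAddCommGroup V] [NormedSpace ℝ V] [FiniteDimensional ℝ V]
  {n : ℕ} (form : V →ₗ[ℝ] V →ₗ[ℝ] ℝ) (b : Module.Basis (Fin 2 ⊕ Fin n) ℝ V)

/-- the component of `P(V)` where the projected frame is positively oriented -/
def stdSet : Set (V × V) :=
  {p | (0 < form p.1 p.1 ∧
      0 < form p.1 p.1 * form p.2 p.2 - (form p.1 p.2)^2) ∧
      0 < b.repr p.1 (Sum.inl 0) * b.repr p.2 (Sum.inl 1)
        - b.repr p.1 (Sum.inl 1) * b.repr p.2 (Sum.inl 0)}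

theorem form_comb (horth : ∀ i j, i ≠ j → form (b i) (b j) = 0)
    (u₁ u₂ v₁ v₂ : ℝ) :
    form (u₁ • b (Sum.inl 0) + u₂ • b (Sum.inl 1))
         (v₁ • b (Sum.inl 0) + v₂ • b (Sum.inl 1))
      = u₁ * v₁ * form (b (Sum.inl 0)) (b (Sum.inl 0))
        + u₂ * v₂ * form (b (Sum.inl 1)) (b (Sum.inl 1)) := by
  have h01 : form (b (Sum.inl 0)) (b (Sum.inl 1)) = 0 := horth _ _ (by simp)
  have h10 : form (b (Sum.inl 1)) (b (Sum.inl 0)) = 0 := horth _ _ (by simp)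
  simp only [map_add, map_smul, LinearMap.add_apply, LinearMap.smul_apply, smul_eq_mul,
    h01, h10]
  ring

theorem repr_comb (u₁ u₂ : ℝ) (i : Fin 2) :
    b.repr (u₁ • b (Sum.inl 0) + u₂ • b (Sum.inl 1)) (Sum.inl i)
      = if i = 0 then u₁ else u₂ := by
  fin_cases i <;> simp [map_add, map_smul, Module.Basis.repr_self, Finsupp.single_apply]

theorem mem_J (horth : ∀ i j, i ≠ j → form (b i) (b j) = 0)
    (hpos : ∀ i : Fin 2, 0 < form (b (Sum.inl i)) (b (Sum.inl i)))
    (u₁ u₂ v₁ v₂ : ℝ) (hD : 0 < u₁ * v₂ - u₂ * v₁) :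
    (u₁ • b (Sum.inl 0) + u₂ • b (Sum.inl 1),
     v₁ • b (Sum.inl 0) + v₂ • b (Sum.inl 1)) ∈ stdSet form b := by
  have hq₁ := hpos 0
  have hq₂ := hpos 1
  set q₁ := form (b (Sum.inl 0)) (b (Sum.inl 0)) with hq₁d
  set q₂ := form (b (Sum.inl 1)) (b (Sum.inl 1)) with hq₂d
  have hu : ¬ (u₁ = 0 ∧ u₂ = 0) := by
    rintro ⟨rfl, rfl⟩; norm_num at hD
  refine ⟨⟨?_, ?_⟩, ?_⟩
  · rw [form_comb form b horth]
    rcases eq_or_ne u₁ 0 with h | h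
    · have h2 : u₂ ≠ 0 := fun h2 => hu ⟨h, h2⟩
      have := mul_pos (mul_pos (mul_self_pos.2 h2) hq₂) (by norm_num : (0:ℝ) < 1)
      rw [h]
      nlinarith [mul_pos (mul_self_pos.2 h2) hq₂]
    · nlinarith [mul_pos (mul_self_pos.2 h) hq₁,
        mul_nonneg (mul_self_nonneg u₂) hq₂.le]
  · rw [form_comb form b horth, form_comb form b horth, form_comb form b horth]
    have e : (u₁*u₁*q₁ + u₂*u₂*q₂) * (v₁*v₁*q₁ + v₂*v₂*q₂)
        - (u₁*v₁*q₁ + u₂*v₂*q₂)^2 = q₁*q₂*(u₁*v₂ - u₂*v₁)^2 := by ring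
    rw [e]
    exact mul_pos (mul_pos hq₁ hq₂) (pow_pos hD 2)
  · simp only [repr_comb]
    norm_num
    linarith

theorem repr_sub_smul (lam : ℝ) (x y : V) (i : Fin 2 ⊕ Fin n) :
    b.repr (y - lam • x) (Sum.inl 0) = b.repr y (Sum.inl 0) - lam * b.repr x (Sum.inl 0) := by
  simp [map_sub, map_smul]

theorem d_ne_zero (hsymm : ∀ x y : V, form x y = form y x)
    (horth : ∀ i j, i ≠ j → form (b i) (b j) = 0)
    (hneg : ∀ j : Fin n, form (b (Sum.inr j)) (b (Sum.inr j)) < 0)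
    (x y : V) (hA : 0 < form x x)
    (hG : 0 < form x x * form y y - (form x y)^2) :
    b.repr x (Sum.inl 0) * b.repr y (Sum.inl 1)
      - b.repr x (Sum.inl 1) * b.repr y (Sum.inl 0) ≠ 0 := by
  intro h0
  have key : ∀ lam : ℝ,
      b.repr (y - lam • x) (Sum.inl 0) = 0 →
      b.repr (y - lam • x) (Sum.inl 1) = 0 → False := by
    intro lam hz0 hz1
    have hle := form_nonpos form b horth hneg _ hz0 hz1
    have hexp : form (y - lam • x) (y - lam • x)
        = form y y - 2*lam*form x y + lam^2 * form x x := by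
      simp only [map_sub, map_smul, LinearMap.sub_apply, LinearMap.smul_apply, smul_eq_mul]
      rw [hsymm y x]
      ring
    rw [hexp] at hle
    nlinarith [sq_nonneg (lam * form x x - form x y)]
  have hrepr : ∀ (lam : ℝ) (i : Fin 2 ⊕ Fin n),
      b.repr (y - lam • x) i = b.repr y i - lam * b.repr x i := by
    intro lam i; simp [map_sub, map_smul]
  rcases eq_or_ne (b.repr x (Sum.inl 0)) 0 with h1 | h1
  · rcases eq_or_ne (b.repr x (Sum.inl 1)) 0 with h2 | h2
    · have := form_nonpos form b horth hneg x h1 h2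
      linarith
    · have hy0 : b.repr y (Sum.inl 0) = 0 := by
        rw [h1] at h0
        have h3 : b.repr x (Sum.inl 1) * b.repr y (Sum.inl 0) = 0 := by linarith
        rcases mul_eq_zero.1 h3 with h | h
        · exact absurd h h2
        · exact h
      refine key (b.repr y (Sum.inl 1) / b.repr x (Sum.inl 1)) ?_ ?_
      · rw [hrepr, h1, hy0]; ring
      · rw [hrepr]; field_simp; simp
  · refine key (b.repr y (Sum.inl 0) / b.repr x (Sum.inl 0)) ?_ ?_
    · rw [hrepr]; field_simp; simp
    · rw [hrepr]; field_simp; linear_combination h0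

end vspace2
theorem JoinedIn.congr_pts {X : Type*} [TopologicalSpace X] {U : Set X} {a a' c c' : X}
    (h : JoinedIn U a c) (ha : a = a') (hc : c = c') : JoinedIn U a' c' := ha ▸ hc ▸ h

theorem aux_posdef_add (A B C a b c : ℝ) (hA : 0 < A) (hG : 0 < A*C - B^2)
    (ha : 0 ≤ a) (hc : 0 ≤ c) (hg : b^2 ≤ a*c) :
    0 < (A+a)*(C+c) - (B+b)^2 := by
  have hAC : B^2 ≤ A*C := by nlinarith
  have hC : 0 ≤ C := by nlinarith [sq_nonneg B]
  have h2 : B^2*b^2 ≤ (A*C)*(a*c) :=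
    mul_le_mul hAC hg (sq_nonneg b) (le_trans (sq_nonneg B) hAC)
  have hs : 0 ≤ A*c + a*C := by
    have := mul_nonneg hA.le hc; have := mul_nonneg ha hC; linarith
  have h1 : 2*(B*b) ≤ A*c + a*C := by nlinarith [sq_nonneg (A*c - a*C), h2, hs]
  nlinarith [h1, hg]

theorem aux_seg1 (aP aN bP bN cP cN s : ℝ) (hs0 : 0 ≤ s) (hs1 : s ≤ 1)
    (hA : 0 < aP + aN) (hG : 0 < (aP+aN)*(cP+cN) - (bP+bN)^2)
    (haN : aN ≤ 0) (hcN : cN ≤ 0) (hcs : bN^2 ≤ aN*cN) :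
    0 < aP + s^2*aN ∧ 0 < (aP + s^2*aN)*(cP + s^2*cN) - (bP + s^2*bN)^2 := by
  have hss : s^2 ≤ 1 := by nlinarith
  constructor
  · nlinarith
  · have h := aux_posdef_add (aP+aN) (bP+bN) (cP+cN)
      ((1-s^2)*(-aN)) ((1-s^2)*(-bN)) ((1-s^2)*(-cN)) hA hG
      (by nlinarith) (by nlinarith) (by nlinarith [sq_nonneg (1-s^2), hcs])
    nlinarith [h]

section vspace3

set_option linter.unusedSectionVars false
set_option maxHeartbeats 1000000

variable {V : Type*} [NormedAddCommGroup V] [NormedSpace ℝ V] [FiniteDimensional ℝ V]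
  {n : ℕ} (form : V →ₗ[ℝ] V →ₗ[ℝ] ℝ) (b : Module.Basis (Fin 2 ⊕ Fin n) ℝ V)

theorem form_continuous : Continuous (fun p : V × V => form p.1 p.2) := by
  let L : V →ₗ[ℝ] (V →L[ℝ] ℝ) :=
    { toFun := fun x => LinearMap.toContinuousLinearMap (form x)
      map_add' := by intro u v; ext w; simp
      map_smul' := by intro c u; ext w; simp }
  exact (LinearMap.toContinuousLinearMap L).continuous₂

theorem key_joined (hsymm : ∀ x y : V, form x y = form y x)
    (horth : ∀ i j, i ≠ j → form (b i) (b j) = 0)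
    (hpos : ∀ i : Fin 2, 0 < form (b (Sum.inl i)) (b (Sum.inl i)))
    (hneg : ∀ j : Fin n, form (b (Sum.inr j)) (b (Sum.inr j)) < 0)
    (p : V × V) (hp : p ∈ stdSet form b) :
    JoinedIn (stdSet form b) p (b (Sum.inl 0), b (Sum.inl 1)) := by
  obtain ⟨x, y⟩ := p
  obtain ⟨⟨hA, hG⟩, hd⟩ := hp
  -- rewrite hA, hG using the decomposition
  rw [form_decomp form b hsymm horth x x] at hA
  rw [form_decomp form b hsymm horth x x, form_decomp form b hsymm horth y y,
    form_decomp form b hsymm horth x y] at hG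
  -- Segment 1 : kill the negative part
  have hseg1 : JoinedIn (stdSet form b) (x, y) (proj b x, proj b y) := by
    have h := joinedIn_segment (U := stdSet form b)
      (fun t => (proj b x + (1-t) • negpart b x, proj b y + (1-t) • negpart b y))
      (by fun_prop)
      (fun t ht => by
        have hs0 : (0:ℝ) ≤ 1 - t := by linarith [ht.2]
        have hs1 : 1 - t ≤ 1 := by linarith [ht.1]
        obtain ⟨g1, g2⟩ := aux_seg1
          (form (proj b x) (proj b x)) (form (negpart b x) (negpart b x))
          (form (proj b x) (proj b y)) (form (negpart b x) (negpart b y))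
          (form (proj b y) (proj b y)) (form (negpart b y) (negpart b y))
          (1-t) hs0 hs1 hA hG
          (form_nonpos form b horth hneg _ (repr_negpart b x 0) (repr_negpart b x 1))
          (form_nonpos form b horth hneg _ (repr_negpart b y 0) (repr_negpart b y 1))
          (cs_neg form b hsymm horth hneg x y)
        refine ⟨⟨?_, ?_⟩, ?_⟩
        · rw [form_split form b hsymm horth]
          exact g1
        · rw [form_split form b hsymm horth x x, form_split form b hsymm horth y y,
            form_split form b hsymm horth x y]
          exact g2
        · have hc : ∀ (v : V) (i : Fin 2),
              b.repr (proj b v + (1-t) • negpart b v) (Sum.inl i) = b.repr v (Sum.inl i) := by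
            intro v i
            rw [map_add, map_smul]
            simp only [Finsupp.coe_add, Finsupp.coe_smul, Pi.add_apply, Pi.smul_apply,
              smul_eq_mul]
            rw [repr_proj, repr_negpart]
            ring
          simp only [hc]
          exact hd)
    have e0 : (proj b x + (1-(0:ℝ)) • negpart b x, proj b y + (1-(0:ℝ)) • negpart b y)
        = (x, y) := by
      norm_num
      exact ⟨decomp' b x, decomp' b y⟩
    have e1 : (proj b x + (1-(1:ℝ)) • negpart b x, proj b y + (1-(1:ℝ)) • negpart b y)
        = (proj b x, proj b y) := by
      norm_num
    exact h.congr_pts e0 e1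
  -- Segment 2 : inside the positive plane
  have hseg2 : JoinedIn (stdSet form b) (proj b x, proj b y)
      (b (Sum.inl 0), b (Sum.inl 1)) := by
    set Jm : (ℝ × ℝ) × (ℝ × ℝ) → V × V := fun w =>
      (w.1.1 • b (Sum.inl 0) + w.1.2 • b (Sum.inl 1),
       w.2.1 • b (Sum.inl 0) + w.2.2 • b (Sum.inl 1)) with hJm
    have hJcont : Continuous Jm := by fun_prop
    have hsub : Jm '' glSet ⊆ stdSet form b := by
      rintro _ ⟨⟨⟨u₁, u₂⟩, v₁, v₂⟩, hw, rfl⟩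
      exact mem_J form b horth hpos u₁ u₂ v₁ v₂ hw
    have hstart : ((b.repr x (Sum.inl 0), b.repr x (Sum.inl 1)),
        (b.repr y (Sum.inl 0), b.repr y (Sum.inl 1))) ∈ glSet := hd
    have h := ((gl2_joined _ hstart).map hJcont).mono hsub
    have e0 : Jm ((b.repr x (Sum.inl 0), b.repr x (Sum.inl 1)),
        (b.repr y (Sum.inl 0), b.repr y (Sum.inl 1))) = (proj b x, proj b y) := rfl
    have e1 : Jm ((1, 0), (0, 1)) = (b (Sum.inl 0), b (Sum.inl 1)) := by
      simp [hJm]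
    exact h.congr_pts e0 e1
  exact hseg1.trans hseg2

end vspace3
/-- Let `V` be a finite-dimensional real vector space with a nondegenerate
symmetric bilinear form of signature `(2,n)`, `n ≥ 1` (witnessed by an orthogonal basis with
2 vectors of positive square and `n` of negative square).  Identify `V ⊗ ℂ` with `V × V`
(real and imaginary parts), and let
`P(V) = {x + iy : ⟨x,x⟩ > 0 and ⟨x,x⟩⟨y,y⟩ − ⟨x,y⟩² > 0}`.  Then `P(V)` is open, has
exactly two connected components, and complex conjugation `x + iy ↦ x − iy` maps each
component homeomorphically onto the other. -/
theorem stmt9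
    {V : Type*} [NormedAddCommGroup V] [NormedSpace ℝ V] [FiniteDimensional ℝ V]
    (n : ℕ) (hn : 1 ≤ n)
    (form : V →ₗ[ℝ] V →ₗ[ℝ] ℝ)
    (hsymm : ∀ x y : V, form x y = form y x)
    (hsig : ∃ b : Module.Basis (Fin 2 ⊕ Fin n) ℝ V,
      (∀ i j, i ≠ j → form (b i) (b j) = 0) ∧
      (∀ i : Fin 2, 0 < form (b (Sum.inl i)) (b (Sum.inl i))) ∧
      (∀ j : Fin n, form (b (Sum.inr j)) (b (Sum.inr j)) < 0))
    (P : Set (V × V))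
    (hP : P = {p : V × V | 0 < form p.1 p.1 ∧
      0 < form p.1 p.1 * form p.2 p.2 - (form p.1 p.2) ^ 2}) :
    IsOpen P ∧
    ∃ U₁ U₂ : Set (V × V),
      IsOpen U₁ ∧ IsOpen U₂ ∧ IsConnected U₁ ∧ IsConnected U₂ ∧
      U₁ ∩ U₂ = ∅ ∧ U₁ ∪ U₂ = P ∧
      (fun p : V × V => (p.1, -p.2)) '' U₁ = U₂ ∧
      (fun p : V × V => (p.1, -p.2)) '' U₂ = U₁ ∧
      ∃ h : ↥U₁ ≃ₜ ↥U₂, ∀ p : ↥U₁, (h p : V × V) = ((p : V × V).1, -(p : V × V).2) := by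
  obtain ⟨b, horth, hpos, hneg⟩ := hsig
  -- continuity facts
  have hF : Continuous (fun p : V × V => form p.1 p.2) := form_continuous form
  have hF11 : Continuous (fun p : V × V => form p.1 p.1) :=
    hF.comp (continuous_fst.prodMk continuous_fst)
  have hF22 : Continuous (fun p : V × V => form p.2 p.2) :=
    hF.comp (continuous_snd.prodMk continuous_snd)
  have hGc : Continuous (fun p : V × V =>
      form p.1 p.1 * form p.2 p.2 - (form p.1 p.2) ^ 2) :=
    (hF11.mul hF22).sub (hF.pow 2)
  have hcoord : ∀ i : Fin 2 ⊕ Fin n, Continuous (fun v : V => b.repr v i) := by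
    intro i
    have h := (b.coord i).continuous_of_finiteDimensional
    exact h
  have hdc : Continuous (fun p : V × V =>
      b.repr p.1 (Sum.inl 0) * b.repr p.2 (Sum.inl 1)
        - b.repr p.1 (Sum.inl 1) * b.repr p.2 (Sum.inl 0)) :=
    (((hcoord _).comp continuous_fst).mul ((hcoord _).comp continuous_snd)).sub
      (((hcoord _).comp continuous_fst).mul ((hcoord _).comp continuous_snd))
  have hPopen : IsOpen P := by
    rw [hP, Set.setOf_and]
    exact (isOpen_lt continuous_const hF11).inter (isOpen_lt continuous_const hGc)
  -- involution facts
  have himg : ∀ s : Set (V × V),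
      ((fun p : V × V => (p.1, -p.2)) '' s) = (fun p : V × V => (p.1, -p.2)) ⁻¹' s := by
    intro s
    exact congrFun (Set.image_eq_preimage_of_inverse
      (fun p : V × V => by simp) (fun p : V × V => by simp)) s
  have hmemσ : ∀ q : V × V, ((q.1, -q.2) ∈ stdSet form b ↔
      ((0 < form q.1 q.1 ∧ 0 < form q.1 q.1 * form q.2 q.2 - (form q.1 q.2)^2) ∧
        b.repr q.1 (Sum.inl 0) * b.repr q.2 (Sum.inl 1)
          - b.repr q.1 (Sum.inl 1) * b.repr q.2 (Sum.inl 0) < 0)) := by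
    intro q
    simp only [stdSet, Set.mem_setOf_eq, map_neg, LinearMap.neg_apply, Finsupp.coe_neg,
      Pi.neg_apply, mul_neg, neg_neg, neg_sq]
    constructor <;> rintro ⟨⟨ha, hg⟩, hd⟩ <;> exact ⟨⟨ha, hg⟩, by linarith⟩
  have hU2eq : (fun p : V × V => (p.1, -p.2)) '' stdSet form b =
      {p : V × V | (0 < form p.1 p.1 ∧
        0 < form p.1 p.1 * form p.2 p.2 - (form p.1 p.2)^2) ∧
        b.repr p.1 (Sum.inl 0) * b.repr p.2 (Sum.inl 1)
          - b.repr p.1 (Sum.inl 1) * b.repr p.2 (Sum.inl 0) < 0} := by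
    rw [himg]
    ext q
    exact hmemσ q
  have hU1open : IsOpen (stdSet form b) := by
    unfold stdSet
    rw [Set.setOf_and, Set.setOf_and]
    exact ((isOpen_lt continuous_const hF11).inter
      (isOpen_lt continuous_const hGc)).inter (isOpen_lt continuous_const hdc)
  have hbase : (b (Sum.inl 0), b (Sum.inl 1)) ∈ stdSet form b := by
    have h := mem_J form b horth hpos 1 0 0 1 (by norm_num)
    simpa using h
  have hpc : IsPathConnected (stdSet form b) :=
    ⟨_, hbase, fun _ hq => (key_joined form b hsymm horth hpos hneg _ hq).symm⟩
  have hconn1 : IsConnected (stdSet form b) := hpc.isConnected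
  have hσcont : Continuous (fun p : V × V => (p.1, -p.2)) :=
    continuous_fst.prodMk continuous_snd.neg
  refine ⟨hPopen, stdSet form b, (fun p : V × V => (p.1, -p.2)) '' stdSet form b,
    hU1open, ?_, hconn1, hconn1.image _ hσcont.continuousOn, ?_, ?_, rfl, ?_, ?_⟩
  · -- IsOpen U₂
    rw [hU2eq, Set.setOf_and, Set.setOf_and]
    exact ((isOpen_lt continuous_const hF11).inter
      (isOpen_lt continuous_const hGc)).inter (isOpen_lt hdc continuous_const)
  · -- disjoint
    rw [hU2eq]
    ext p
    simp only [Set.mem_inter_iff, Set.mem_empty_iff_false, iff_false, Set.mem_setOf_eq,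
      stdSet, not_and]
    rintro ⟨⟨_, _⟩, hd1⟩ ⟨_, hd2⟩
    linarith
  · -- union
    rw [hU2eq, hP]
    ext p
    simp only [Set.mem_union, Set.mem_setOf_eq, stdSet]
    constructor
    · rintro (⟨h, _⟩ | ⟨h, _⟩) <;> exact h
    · intro h
      rcases (d_ne_zero form b hsymm horth hneg p.1 p.2 h.1 h.2).lt_or_gt with hlt | hgt
      · exact Or.inr ⟨h, hlt⟩
      · exact Or.inl ⟨h, hgt⟩
  · -- σ '' U₂ = U₁
    rw [Set.image_image]
    simp
  · -- homeomorphism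
    refine ⟨Homeomorph.image
      { toEquiv :=
        { toFun := fun p : V × V => (p.1, -p.2)
          invFun := fun p : V × V => (p.1, -p.2)
          left_inv := fun p => by simp
          right_inv := fun p => by simp }
        continuous_toFun := hσcont
        continuous_invFun := hσcont } (stdSet form b), fun p => rfl⟩
end
end

section
/- Let Δ ⊆ V be any subset and let P₀ = {℧ ∈ P(V) : ⟨℧,δ⟩ ≠ 0 for all δ ∈ Δ} (P(V) with the hyperplanes δ^⊥ removed). Then for every ℧ ∈ P₀ the loop γ : [0,1] → V ⊗ ℂ, γ(t) = (cos 2πt + i·sin 2πt)·℧, takes values in P₀, and its homotopy class has infinite order in the fundamental group π₁(P₀, ℧). (In particular the ℂ*-loop maps injectively from π₁ of a component of P(V) into π₁ of the hyperplane complement, the key step in comparing the stability manifolds of an Abelian surface and its Kummer surface.) -/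
open scoped Real
open CategoryTheory
open unitInterval

/-- a continuous function whose exponential is constantly 1 is constant on a
preconnected space -/
lemma stmt13_aux_const {X : Type*} [TopologicalSpace X] [PreconnectedSpace X]
    {d : X → ℂ} (hd : Continuous d) (h1 : ∀ x, Complex.exp (d x) = 1) (x y : X) :
    d x = d y := by
  have hm : ∀ x : X, ∃ m : ℤ, d x = m * (2 * π * Complex.I) :=
    fun x => Complex.exp_eq_one_iff.mp (h1 x)
  have him : ∀ (x : X) (m : ℤ), d x = m * (2 * π * Complex.I) → (d x).im = m * (2 * π) := by
    intro x m h
    rw [h]; simp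
  have key : ∀ (u v : X) (mu mv : ℤ), d u = mu * (2 * π * Complex.I) →
      d v = mv * (2 * π * Complex.I) → mu < mv → False := by
    intro u v mu mv hu hv hlt
    have hq : Continuous fun x => (d x).im := Complex.continuous_im.comp hd
    have hmem : (mu * (2 * π) + π) ∈ Set.Icc ((d u).im) ((d v).im) := by
      rw [him u mu hu, him v mv hv]
      have hpi := Real.pi_pos
      have : (mu : ℝ) + 1 ≤ mv := by exact_mod_cast hlt
      constructor <;> nlinarith
    obtain ⟨z, hz⟩ := intermediate_value_univ u v hq hmem
    obtain ⟨mz, hmz⟩ := hm z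
    have hz' : (d z).im = mu * (2 * π) + π := by simpa using hz
    have h2 : (mz : ℝ) * (2 * π) = mu * (2 * π) + π := by rw [← him z mz hmz, hz']
    have h3 : (2 * mz : ℝ) * π = (2 * mu + 1) * π := by linarith
    have h4 : (2 * mz : ℝ) = 2 * mu + 1 := mul_right_cancel₀ Real.pi_ne_zero h3
    have h5 : (2 * mz : ℤ) = 2 * mu + 1 := by exact_mod_cast h4
    omega
  obtain ⟨mx, hmx⟩ := hm x
  obtain ⟨my, hmy⟩ := hm y
  rcases lt_trichotomy mx my with h | h | h
  · exact absurd (key x y mx my hmx hmy h) not_false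
  · rw [hmx, hmy, h]
  · exact absurd (key y x my mx hmy hmx h) not_false

/-- uniqueness of lifts through exp -/
lemma stmt13_aux_uniq {X : Type*} [TopologicalSpace X] [PreconnectedSpace X]
    {h₁ h₂ : X → ℂ} (hc₁ : Continuous h₁) (hc₂ : Continuous h₂)
    (he : ∀ x, Complex.exp (h₁ x) = Complex.exp (h₂ x)) {a : X} (ha : h₁ a = h₂ a) (b : X) :
    h₁ b = h₂ b := by
  have h1 : ∀ x, Complex.exp (h₁ x - h₂ x) = 1 := by
    intro x; rw [Complex.exp_sub, he x, div_self (Complex.exp_ne_zero _)]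
  have := stmt13_aux_const (hc₁.sub hc₂) h1 b a
  rw [Pi.sub_apply, Pi.sub_apply, ha, sub_self] at this
  exact sub_eq_zero.mp this
open unitInterval

private lemma stmt13_telescope (f : ℕ → ℂ) (hf : ∀ i, f i ≠ 0) (N : ℕ) :
    ∏ i ∈ Finset.range N, (f (i + 1) / f i) = f N / f 0 := by
  induction N with
  | zero => simp [div_self (hf 0)]
  | succ N ih =>
    rw [Finset.prod_range_succ, ih, div_mul_div_comm, mul_comm (f 0), mul_div_mul_left _ _ (hf N)]

private lemma stmt13_clamp (x y : ℝ) : |max 0 (min 1 x) - max 0 (min 1 y)| ≤ |x - y| := by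
  calc |max 0 (min 1 x) - max 0 (min 1 y)| ≤ max |(0:ℝ) - 0| |min 1 x - min 1 y| :=
        abs_max_sub_max_le_max _ _ _ _
    _ ≤ |min 1 x - min 1 y| := by simp
    _ ≤ max |(1:ℝ) - 1| |x - y| := abs_min_sub_min_le_max _ _ _ _
    _ ≤ |x - y| := by simp

/-- lifting a continuous nonvanishing map on the unit square through `Complex.exp`,
with constant bottom edge -/
lemma stmt13_lift_square {H : (I × I) → ℂ} (hH : Continuous H)
    (h0 : ∀ p, H p ≠ 0) {z₀ : ℂ} (hz : ∀ s : I, H (s, 0) = Complex.exp z₀) :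
    ∃ h : (I × I) → ℂ, Continuous h ∧
      (∀ p, Complex.exp (h p) = H p) ∧ ∀ s : I, h (s, 0) = z₀ := by
  obtain ⟨p₀, -, hmin'⟩ := isCompact_univ.exists_isMinOn (Set.univ_nonempty)
    (continuous_norm.comp hH).continuousOn
  have hmin : ∀ q : I × I, ‖H p₀‖ ≤ ‖H q‖ := fun q => hmin' (Set.mem_univ q)
  set ε := ‖H p₀‖ with hε
  have hεpos : 0 < ε := norm_pos_iff.mpr (h0 p₀)
  have hu : UniformContinuous H := CompactSpace.uniformContinuous_of_continuous hH
  rw [Metric.uniformContinuous_iff] at hu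
  obtain ⟨δ, hδ, hδ'⟩ := hu ε hεpos
  obtain ⟨N, hN⟩ := exists_nat_gt (max 1 (1 / δ))
  have hN1 : (1 : ℝ) < N := lt_of_le_of_lt (le_max_left _ _) hN
  have hN0 : (0 : ℝ) < N := by linarith
  have h1N : 1 / (N : ℝ) < δ := by
    rw [div_lt_iff₀ hN0]
    have : 1 / δ < N := lt_of_le_of_lt (le_max_right _ _) hN
    calc (1:ℝ) = δ * (1/δ) := by field_simp
      _ < δ * N := by exact mul_lt_mul_of_pos_left this hδ
      _ = δ * N := rfl
  -- subdivision points
  set u : ℕ → I → I := fun i t => Set.projIcc (0:ℝ) 1 zero_le_one (min (t:ℝ) (i / N)) with hu_def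
  have hucoe : ∀ i (t : I), ((u i t : I) : ℝ) = max 0 (min 1 (min (t:ℝ) (i / N))) := by
    intro i t; rw [hu_def]; rfl
  have hu0 : ∀ i, u i 0 = 0 := by
    intro i
    apply Subtype.ext
    rw [hucoe]
    have hx : (0:ℝ) ≤ (i:ℝ) / N := by positivity
    simp [Set.Icc.coe_zero, min_eq_left hx]
  have hu0' : ∀ t : I, u 0 t = 0 := by
    intro t
    apply Subtype.ext
    rw [hucoe]
    have hx : ((0:ℕ):ℝ) / N = 0 := by simp
    rw [hx, min_eq_right t.2.1]
    simp
  have huN : ∀ t : I, u N t = t := by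
    intro t
    apply Subtype.ext
    rw [hucoe]
    have h1 : ((N:ℕ):ℝ) / N = 1 := by field_simp
    rw [h1, min_eq_left t.2.2]
    rw [min_eq_right t.2.2, max_eq_right t.2.1]
  have hdist : ∀ i (t : I), dist (u (i+1) t) (u i t) ≤ 1 / N := by
    intro i t
    rw [Subtype.dist_eq, Real.dist_eq, hucoe, hucoe]
    push_cast
    calc |max 0 (min 1 (min (t:ℝ) (((i:ℝ)+1) / N))) - max 0 (min 1 (min (t:ℝ) ((i:ℝ) / N)))|
        ≤ |min (t:ℝ) (((i:ℝ)+1) / N) - min (t:ℝ) ((i:ℝ) / N)| := stmt13_clamp _ _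
      _ ≤ max |(t:ℝ) - (t:ℝ)| |((i:ℝ)+1) / N - (i:ℝ) / N| := abs_min_sub_min_le_max _ _ _ _
      _ ≤ 1 / N := by
          rw [sub_self, abs_zero]
          have h9 : ((i:ℝ)+1) / (N:ℝ) - (i:ℝ) / N = 1 / N := by field_simp; ring
          rw [h9, max_eq_right (abs_nonneg _), abs_of_nonneg (by positivity : (0:ℝ) ≤ 1 / (N:ℝ))]
  -- the ratio bound
  have hrb : ∀ (s t : I) (i : ℕ), ‖H (s, u (i+1) t) / H (s, u i t) - 1‖ < 1 := by
    intro s t i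
    have hq := h0 (s, u i t)
    have hd : dist ((s, u (i+1) t) : I × I) (s, u i t) < δ := by
      rw [Prod.dist_eq]
      apply max_lt
      · simpa [dist_self] using hδ
      · exact lt_of_le_of_lt (hdist i t) h1N
    have h2 := hδ' hd
    have h3 : ε ≤ ‖H (s, u i t)‖ := hmin _
    have heq : H (s, u (i+1) t) / H (s, u i t) - 1
        = (H (s, u (i+1) t) - H (s, u i t)) / H (s, u i t) := by field_simp
    rw [heq, norm_div, div_lt_one (norm_pos_iff.mpr hq)]
    calc ‖H (s, u (i+1) t) - H (s, u i t)‖ = dist (H (s, u (i+1) t)) (H (s, u i t)) :=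
          (dist_eq_norm _ _).symm
      _ < ε := h2
      _ ≤ ‖H (s, u i t)‖ := h3
  have hrne : ∀ (s t : I) (i : ℕ), H (s, u (i+1) t) / H (s, u i t) ≠ 0 := by
    intro s t i
    exact div_ne_zero (h0 _) (h0 _)
  refine ⟨fun q => z₀ + ∑ i ∈ Finset.range N, Complex.log (H (q.1, u (i+1) q.2) / H (q.1, u i q.2)),
    ?_, ?_, ?_⟩
  · apply continuous_const.add
    apply continuous_finset_sum
    intro i _
    have hRc : Continuous fun q : I × I => H (q.1, u (i+1) q.2) / H (q.1, u i q.2) := by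
      have hc : ∀ j : ℕ, Continuous fun q : I × I => H (q.1, u j q.2) := by
        intro j
        apply hH.comp
        apply continuous_fst.prodMk
        apply (continuous_projIcc).comp
        exact (continuous_subtype_val.comp continuous_snd).min continuous_const
      exact (hc (i+1)).div (hc i) (fun q => h0 _)
    rw [continuous_iff_continuousAt]
    intro q
    apply hRc.continuousAt.clog
    left
    have hb := hrb q.1 q.2 i
    have := Complex.abs_re_le_norm (H (q.1, u (i+1) q.2) / H (q.1, u i q.2) - 1)
    rw [Complex.sub_re, Complex.one_re] at this
    have habs : |(H (q.1, u (i+1) q.2) / H (q.1, u i q.2)).re - 1| < 1 := lt_of_le_of_lt this hb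
    rw [abs_lt] at habs
    linarith [habs.1]
  · rintro ⟨s, t⟩
    rw [Complex.exp_add, Complex.exp_sum]
    have : ∀ i ∈ Finset.range N,
        Complex.exp (Complex.log (H (s, u (i+1) t) / H (s, u i t)))
          = H (s, u (i+1) t) / H (s, u i t) := by
      intro i _
      exact Complex.exp_log (hrne s t i)
    rw [Finset.prod_congr rfl this]
    rw [stmt13_telescope (fun i => H (s, u i t)) (fun i => h0 _) N]
    rw [huN t, hu0' t, hz s]
    rw [mul_comm, div_mul_cancel₀ _ (Complex.exp_ne_zero _)]
  · intro s
    have : ∀ i ∈ Finset.range N,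
        Complex.log (H (s, u (i+1) (0:I)) / H (s, u i (0:I))) = 0 := by
      intro i _
      rw [hu0 (i+1), hu0 i, div_self (h0 _), Complex.log_one]
    have hsum : ∑ i ∈ Finset.range N,
        Complex.log (H (s, u (i+1) (0:I)) / H (s, u i (0:I))) = 0 := Finset.sum_eq_zero this
    show z₀ + ∑ i ∈ Finset.range N,
        Complex.log (H (s, u (i+1) (0:I)) / H (s, u i (0:I))) = z₀
    rw [hsum, add_zero]
set_option maxHeartbeats 2000000 in
/-- Let `V` have signature `(2,n)`, `n ≥ 1`, let `Δ ⊆ V`, and let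
`P₀ = {℧ ∈ P(V) : ⟨℧,δ⟩ ≠ 0 for all δ ∈ Δ}` be the hyperplane complement inside
`P(V) ⊆ V ⊗ ℂ ≅ V × V`.  Then for every `℧ ∈ P₀` the `ℂ*`-loop
`t ↦ e^{2πit}·℧` takes values in `P₀`, and its homotopy class has infinite order in
`π₁(P₀, ℧)`. -/
theorem stmt13
    {V : Type*} [NormedAddCommGroup V] [NormedSpace ℝ V] [FiniteDimensional ℝ V]
    (n : ℕ) (hn : 1 ≤ n)
    (form : V →ₗ[ℝ] V →ₗ[ℝ] ℝ)
    (hsymm : ∀ x y : V, form x y = form y x)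
    (hsig : ∃ b : Module.Basis (Fin 2 ⊕ Fin n) ℝ V,
      (∀ i j, i ≠ j → form (b i) (b j) = 0) ∧
      (∀ i : Fin 2, 0 < form (b (Sum.inl i)) (b (Sum.inl i))) ∧
      (∀ j : Fin n, form (b (Sum.inr j)) (b (Sum.inr j)) < 0))
    (Δ : Set V)
    (P₀ : Set (V × V))
    (hP₀ : P₀ = {p : V × V | (0 < form p.1 p.1 ∧
        0 < form p.1 p.1 * form p.2 p.2 - (form p.1 p.2) ^ 2) ∧
      ∀ δ ∈ Δ, form p.1 δ ≠ 0 ∨ form p.2 δ ≠ 0})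
    (℧ : V × V) (h℧ : ℧ ∈ P₀) :
    (∀ t : ℝ,
      ((Real.cos (2 * π * t) • ℧.1 - Real.sin (2 * π * t) • ℧.2,
        Real.sin (2 * π * t) • ℧.1 + Real.cos (2 * π * t) • ℧.2) : V × V) ∈ P₀) ∧
    ∃ γ : Path (⟨℧, h℧⟩ : ↥P₀) ⟨℧, h℧⟩,
      (∀ t : unitInterval, (γ t : V × V) =
        (Real.cos (2 * π * t) • ℧.1 - Real.sin (2 * π * t) • ℧.2,
         Real.sin (2 * π * t) • ℧.1 + Real.cos (2 * π * t) • ℧.2)) ∧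
      ∀ k : ℤ, k ≠ 0 →
        (FundamentalGroup.fromPath (X := TopCat.of ↥P₀)
          (Quotient.mk (Path.Homotopic.setoid _ _) γ)) ^ k ≠ 1 := by
  classical
  obtain ⟨bV, hborth, hbpos, hbneg⟩ := hsig
  set e₁ : V := bV (Sum.inl 0) with he₁
  set e₂ : V := bV (Sum.inl 1) with he₂
  have hα : 0 < form e₁ e₁ := hbpos 0
  have hβ : 0 < form e₂ e₂ := hbpos 1
  -- bilinear expansion helpers
  have hL : ∀ (r s : ℝ) (xx yy w : V), form (r • xx - s • yy) w
      = r * form xx w - s * form yy w := by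
    intro r s xx yy w
    simp [map_sub, map_smul, LinearMap.sub_apply, LinearMap.smul_apply, smul_eq_mul]
  have hLp : ∀ (r s : ℝ) (xx yy w : V), form (r • xx + s • yy) w
      = r * form xx w + s * form yy w := by
    intro r s xx yy w
    simp [map_add, map_smul, LinearMap.add_apply, LinearMap.smul_apply, smul_eq_mul]
  have hRm : ∀ (r s : ℝ) (w xx yy : V), form w (r • xx - s • yy)
      = r * form w xx - s * form w yy := by
    intro r s w xx yy
    rw [hsymm w, hL, hsymm xx w, hsymm yy w]
  have hRp : ∀ (r s : ℝ) (w xx yy : V), form w (r • xx + s • yy)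
      = r * form w xx + s * form w yy := by
    intro r s w xx yy
    rw [hsymm w, hLp, hsymm xx w, hsymm yy w]
  have h℧' := h℧
  rw [hP₀] at h℧'
  obtain ⟨⟨hA, hAC⟩, hΔ℧⟩ := h℧'
  -- part 1 : the loop stays in P₀
  have mem1 : ∀ t : ℝ,
      ((Real.cos (2 * π * t) • ℧.1 - Real.sin (2 * π * t) • ℧.2,
        Real.sin (2 * π * t) • ℧.1 + Real.cos (2 * π * t) • ℧.2) : V × V) ∈ P₀ := by
    intro t
    rw [hP₀]
    set cθ := Real.cos (2 * π * t) with hcθ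
    set sθ := Real.sin (2 * π * t) with hsθ
    have pyth : cθ ^ 2 + sθ ^ 2 = 1 := Real.cos_sq_add_sin_sq _
    set A := form ℧.1 ℧.1 with hA'
    set B := form ℧.1 ℧.2 with hB'
    set C := form ℧.2 ℧.2 with hC'
    have e1 : form (cθ • ℧.1 - sθ • ℧.2) (cθ • ℧.1 - sθ • ℧.2)
        = cθ ^ 2 * A - 2 * cθ * sθ * B + sθ ^ 2 * C := by
      rw [hL, hRm, hRm, hsymm ℧.2 ℧.1]
      ring
    have e2 : form (sθ • ℧.1 + cθ • ℧.2) (sθ • ℧.1 + cθ • ℧.2)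
        = sθ ^ 2 * A + 2 * cθ * sθ * B + cθ ^ 2 * C := by
      rw [hLp, hRp, hRp, hsymm ℧.2 ℧.1]
      ring
    have e3 : form (cθ • ℧.1 - sθ • ℧.2) (sθ • ℧.1 + cθ • ℧.2)
        = cθ * sθ * A + (cθ ^ 2 - sθ ^ 2) * B - cθ * sθ * C := by
      rw [hL, hRp, hRp, hsymm ℧.2 ℧.1]
      ring
    refine ⟨⟨?_, ?_⟩, ?_⟩
    · show 0 < form (cθ • ℧.1 - sθ • ℧.2) (cθ • ℧.1 - sθ • ℧.2)
      rw [e1]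
      have hpos : 0 < A * (cθ ^ 2 * A - 2 * cθ * sθ * B + sθ ^ 2 * C) := by
        have hid : A * (cθ ^ 2 * A - 2 * cθ * sθ * B + sθ ^ 2 * C)
            = (cθ * A - sθ * B) ^ 2 + sθ ^ 2 * (A * C - B ^ 2) := by ring
        rw [hid]
        rcases eq_or_ne sθ 0 with hs | hs
        · have hc : cθ ^ 2 = 1 := by rw [hs] at pyth; simpa using pyth
          rw [hs]
          nlinarith [mul_pos hA hA, hc]
        · have h1 : 0 < sθ ^ 2 := by positivity
          nlinarith [sq_nonneg (cθ * A - sθ * B), mul_pos h1 hAC]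
      by_contra hle
      push_neg at hle
      nlinarith [hpos, mul_nonneg hA.le (neg_nonneg.mpr hle)]
    · show 0 < form (cθ • ℧.1 - sθ • ℧.2) (cθ • ℧.1 - sθ • ℧.2)
          * form (sθ • ℧.1 + cθ • ℧.2) (sθ • ℧.1 + cθ • ℧.2)
          - form (cθ • ℧.1 - sθ • ℧.2) (sθ • ℧.1 + cθ • ℧.2) ^ 2
      rw [e1, e2, e3]
      have hkey : (cθ ^ 2 * A - 2 * cθ * sθ * B + sθ ^ 2 * C)
            * (sθ ^ 2 * A + 2 * cθ * sθ * B + cθ ^ 2 * C)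
            - (cθ * sθ * A + (cθ ^ 2 - sθ ^ 2) * B - cθ * sθ * C) ^ 2
          = (cθ ^ 2 + sθ ^ 2) ^ 2 * (A * C - B ^ 2) := by ring
      rw [hkey, pyth]
      simpa using hAC
    · intro δ hδ
      have hne := hΔ℧ δ hδ
      by_contra hcon
      push_neg at hcon
      obtain ⟨hz1, hz2⟩ := hcon
      rw [hL] at hz1
      rw [hLp] at hz2
      set u := form ℧.1 δ with hu'
      set v := form ℧.2 δ with hv'
      have hu0 : u = 0 := by linear_combination cθ * hz1 + sθ * hz2 - u * pyth
      have hv0 : v = 0 := by linear_combination cθ * hz2 - sθ * hz1 - v * pyth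
      rcases hne with h | h
      · exact h hu0
      · exact h hv0
  -- the projection determinant is nonzero on P₀
  have det_ne : ∀ p : V × V, p ∈ P₀ →
      form p.1 e₁ * form p.2 e₂ - form p.1 e₂ * form p.2 e₁ ≠ 0 := by
    intro p hp hdet0
    rw [hP₀] at hp
    obtain ⟨⟨hpA, hpAC⟩, -⟩ := hp
    set x := p.1 with hx'
    set y := p.2 with hy'
    set fa := form x e₁ with hfa'
    set fb := form x e₂ with hfb'
    set fc := form y e₁ with hfc'
    set fd := form y e₂ with hfd'
    have hlm : ∃ l m : ℝ, (l ≠ 0 ∨ m ≠ 0) ∧ l * fa + m * fc = 0 ∧ l * fb + m * fd = 0 := by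
      by_cases ha : fa = 0 ∧ fc = 0
      · by_cases hb : fb = 0 ∧ fd = 0
        · exact ⟨1, 0, Or.inl one_ne_zero, by rw [ha.1, ha.2]; ring, by rw [hb.1, hb.2]; ring⟩
        · refine ⟨fd, -fb, ?_, by rw [ha.1, ha.2]; ring, by ring⟩
          rw [not_and_or] at hb
          rcases hb with h | h
          · exact Or.inr (neg_ne_zero.mpr h)
          · exact Or.inl h
      · refine ⟨fc, -fa, ?_, by ring, by linear_combination -hdet0⟩
        rw [not_and_or] at ha
        rcases ha with h | h
        · exact Or.inr (neg_ne_zero.mpr h)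
        · exact Or.inl h
    obtain ⟨l, m, hlm0, h1, h2⟩ := hlm
    set u := l • x + m • y with hu'
    have hue1 : form u e₁ = 0 := by rw [hu', hLp]; exact h1
    have hue2 : form u e₂ = 0 := by rw [hu', hLp]; exact h2
    -- u is in the span of the positive plane, so form u u > 0
    have hupos : 0 < form u u := by
      have he : form u u = l ^ 2 * form x x + 2 * l * m * form x y + m ^ 2 * form y y := by
        rw [hu', hLp, hRp, hRp, hsymm y x]
        ring
      rcases eq_or_ne m 0 with hm | hm
      · have hl : l ≠ 0 := by
          rcases hlm0 with h | h
          · exact h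
          · exact absurd hm h
        rw [he, hm]
        have h3 : 0 < l * l := mul_self_pos.mpr hl
        nlinarith [mul_pos h3 hpA]
      · have h3 : 0 < m * m := mul_self_pos.mpr hm
        have h4 : 0 < (m * m) * (form x x * form y y - form x y ^ 2) := mul_pos h3 hpAC
        have h5 : 0 < form x x * form u u := by
          rw [he]
          nlinarith [sq_nonneg (l * form x x + m * form x y)]
        by_contra hle
        push_neg at hle
        nlinarith [mul_nonneg hpA.le (neg_nonneg.mpr hle)]
    -- but u is orthogonal to the positive 2-plane of the basis, so form u u ≤ 0
    have huneg : form u u ≤ 0 := by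
      set r := bV.repr u with hr'
      have hrepr : ∀ w : V, form u w = ∑ i, r i * form (bV i) w := by
        intro w
        conv_lhs => rw [← bV.sum_repr u]
        rw [map_sum, LinearMap.sum_apply]
        apply Finset.sum_congr rfl
        intro i _
        rw [map_smul, LinearMap.smul_apply, smul_eq_mul]
      have hdiag : ∀ i, form u (bV i) = r i * form (bV i) (bV i) := by
        intro i
        rw [hrepr (bV i)]
        rw [Finset.sum_eq_single i]
        · intro j _ hj
          rw [hborth j i hj, mul_zero]
        · intro hmem
          exact absurd (Finset.mem_univ i) hmem
      have hr1 : r (Sum.inl 0) = 0 := by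
        have := hdiag (Sum.inl 0)
        rw [← he₁, hue1] at this
        exact (mul_eq_zero.mp this.symm).resolve_right (ne_of_gt hα)
      have hr2 : r (Sum.inl 1) = 0 := by
        have := hdiag (Sum.inl 1)
        rw [← he₂, hue2] at this
        exact (mul_eq_zero.mp this.symm).resolve_right (ne_of_gt hβ)
      have huu : form u u = ∑ i, r i * (r i * form (bV i) (bV i)) := by
        rw [hrepr u]
        apply Finset.sum_congr rfl
        intro i _
        rw [hsymm (bV i) u, hdiag i]
      rw [huu, Fintype.sum_sum_type]
      have hfirst : ∑ j : Fin 2, r (Sum.inl j) * (r (Sum.inl j)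
          * form (bV (Sum.inl j)) (bV (Sum.inl j))) = 0 := by
        rw [Fin.sum_univ_two, hr1, hr2]
        ring
      rw [hfirst, zero_add]
      apply Finset.sum_nonpos
      intro j _
      have := hbneg j
      nlinarith [mul_self_nonneg (r (Sum.inr j))]
    linarith
  -- orientation data
  set D : ↥P₀ → ℝ := fun p =>
    form (p : V × V).1 e₁ * form (p : V × V).2 e₂
      - form (p : V × V).1 e₂ * form (p : V × V).2 e₁ with hD
  have hDne : ∀ p : ↥P₀, D p ≠ 0 := fun p => det_ne (p : V × V) p.2
  obtain ⟨ε, hεval, hεD⟩ : ∃ ε : ℝ, (ε = 1 ∨ ε = -1) ∧ 0 < ε * D ⟨℧, h℧⟩ := by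
    rcases lt_or_gt_of_ne (hDne ⟨℧, h℧⟩) with h | h
    · exact ⟨-1, Or.inr rfl, by nlinarith⟩
    · exact ⟨1, Or.inl rfl, by nlinarith⟩
  have hε2 : ε ^ 2 = 1 := by rcases hεval with h | h <;> rw [h] <;> norm_num
  have hεne : ε ≠ 0 := by rcases hεval with h | h <;> rw [h] <;> norm_num
  set W : ↥P₀ → ℂ := fun p =>
    ((form (p : V × V).1 e₁ + ε * form (p : V × V).2 e₂ : ℝ) : ℂ)
      + ((form (p : V × V).1 e₂ - ε * form (p : V × V).2 e₁ : ℝ) : ℂ) * Complex.I with hW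
  have hWne : ∀ p : ↥P₀, 0 < ε * D p → W p ≠ 0 := by
    intro p hp hW0
    simp only [hW] at hW0
    have hre := congrArg Complex.re hW0
    have him := congrArg Complex.im hW0
    simp only [Complex.add_re, Complex.ofReal_re, Complex.mul_re, Complex.I_re,
      Complex.I_im, Complex.ofReal_im, Complex.add_im, Complex.mul_im, Complex.zero_re,
      Complex.zero_im, mul_zero, mul_one, zero_mul, sub_zero, zero_sub, add_zero, zero_add,
      neg_zero] at hre him
    have h1 : form (p : V × V).1 e₁ = -(ε * form (p : V × V).2 e₂) := by linarith
    have h2 : form (p : V × V).1 e₂ = ε * form (p : V × V).2 e₁ := by linarith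
    simp only [hD] at hp
    have h3 : ε * (form (p : V × V).1 e₁ * form (p : V × V).2 e₂
        - form (p : V × V).1 e₂ * form (p : V × V).2 e₁)
        = -((form (p : V × V).2 e₂) ^ 2 + (form (p : V × V).2 e₁) ^ 2) := by
      linear_combination ε * form (p : V × V).2 e₂ * h1 - ε * form (p : V × V).2 e₁ * h2 + (-(form (p : V × V).2 e₂) ^ 2 - (form (p : V × V).2 e₁) ^ 2) * hε2
    rw [h3] at hp
    nlinarith [sq_nonneg (form (p : V × V).2 e₂), sq_nonneg (form (p : V × V).2 e₁)]
  have hcont1 : ∀ w : V, Continuous fun p : ↥P₀ => form (p : V × V).1 w := by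
    intro w
    have h1 : Continuous fun p : ↥P₀ => (p : V × V).1 := continuous_subtype_val.fst
    exact (LinearMap.continuous_of_finiteDimensional (form.flip w)).comp h1
  have hcont2 : ∀ w : V, Continuous fun p : ↥P₀ => form (p : V × V).2 w := by
    intro w
    have h1 : Continuous fun p : ↥P₀ => (p : V × V).2 := continuous_subtype_val.snd
    exact (LinearMap.continuous_of_finiteDimensional (form.flip w)).comp h1
  have hDcont : Continuous D := by
    rw [hD]
    exact ((hcont1 e₁).mul (hcont2 e₂)).sub ((hcont1 e₂).mul (hcont2 e₁))
  have hWcont : Continuous W := by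
    rw [hW]
    apply Continuous.add
    · exact Complex.continuous_ofReal.comp ((hcont1 e₁).add (continuous_const.mul (hcont2 e₂)))
    · exact (Complex.continuous_ofReal.comp
        ((hcont1 e₂).sub (continuous_const.mul (hcont2 e₁)))).mul continuous_const
  set cc : ℂ := ((-ε * (2 * π) : ℝ) : ℂ) * Complex.I with hcc
  have hccne : cc ≠ 0 := by
    rw [hcc]
    apply mul_ne_zero _ Complex.I_ne_zero
    rw [Complex.ofReal_ne_zero]
    rcases hεval with h | h <;> rw [h] <;>
      simp [Real.pi_ne_zero]
  have hexpcc : Complex.exp cc = 1 := by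
    rcases hεval with h | h
    · have h9 : cc = ((-1 : ℤ) : ℂ) * (2 * (π : ℂ) * Complex.I) := by
        rw [hcc, h]; push_cast; ring
      rw [h9, Complex.exp_int_mul_two_pi_mul_I]
    · have h9 : cc = ((1 : ℤ) : ℂ) * (2 * (π : ℂ) * Complex.I) := by
        rw [hcc, h]; push_cast; ring
      rw [h9, Complex.exp_int_mul_two_pi_mul_I]
  have hrot : ∀ t : ℝ, W ⟨(Real.cos (2 * π * t) • ℧.1 - Real.sin (2 * π * t) • ℧.2,
      Real.sin (2 * π * t) • ℧.1 + Real.cos (2 * π * t) • ℧.2), mem1 t⟩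
      = Complex.exp (cc * t) * W ⟨℧, h℧⟩ := by
    intro t
    have hK2 : Complex.exp (cc * t) = ((Real.cos (2 * π * t) : ℝ) : ℂ)
        - (ε : ℂ) * ((Real.sin (2 * π * t) : ℝ) : ℂ) * Complex.I := by
      have h9 : cc * t = ((-ε * (2 * π * t) : ℝ) : ℂ) * Complex.I := by
        rw [hcc]; push_cast; ring
      rw [h9, Complex.exp_mul_I, ← Complex.ofReal_cos, ← Complex.ofReal_sin]
      rcases hεval with h | h <;>
        rw [h] <;>
        simp [Real.cos_neg, Real.sin_neg] <;>
        push_cast <;>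
        ring
    rw [hK2]
    simp only [hW, hL, hLp]
    apply Complex.ext
    · simp only [Complex.add_re, Complex.sub_re, Complex.mul_re, Complex.ofReal_re,
        Complex.ofReal_im, Complex.I_re, Complex.I_im, Complex.add_im, Complex.sub_im,
        Complex.mul_im, mul_zero, mul_one, zero_mul, sub_zero, zero_sub, add_zero,
        zero_add, neg_zero, neg_neg]
      linear_combination (Real.sin (2 * π * t) * form ℧.2 e₁) * hε2
    · simp only [Complex.add_re, Complex.sub_re, Complex.mul_re, Complex.ofReal_re,
        Complex.ofReal_im, Complex.I_re, Complex.I_im, Complex.add_im, Complex.sub_im,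
        Complex.mul_im, mul_zero, mul_one, zero_mul, sub_zero, zero_sub, add_zero,
        zero_add, neg_zero, neg_neg]
      linear_combination (Real.sin (2 * π * t) * form ℧.2 e₂) * hε2
  set z₀ : ℂ := Complex.log (W ⟨℧, h℧⟩) with hz₀'
  have hz₀ : Complex.exp z₀ = W ⟨℧, h℧⟩ := Complex.exp_log (hWne _ hεD)
  set γpath : Path (⟨℧, h℧⟩ : ↥P₀) ⟨℧, h℧⟩ :=
    { toFun := fun s => ⟨(Real.cos (2 * π * (s : ℝ)) • ℧.1 - Real.sin (2 * π * (s : ℝ)) • ℧.2,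
        Real.sin (2 * π * (s : ℝ)) • ℧.1 + Real.cos (2 * π * (s : ℝ)) • ℧.2), mem1 (s : ℝ)⟩,
      continuous_toFun := by
        apply Continuous.subtype_mk
        have hc : Continuous fun s : unitInterval => Real.cos (2 * π * (s : ℝ)) :=
          Real.continuous_cos.comp (continuous_const.mul continuous_subtype_val)
        have hs : Continuous fun s : unitInterval => Real.sin (2 * π * (s : ℝ)) :=
          Real.continuous_sin.comp (continuous_const.mul continuous_subtype_val)
        exact ((hc.smul continuous_const).sub (hs.smul continuous_const)).prodMk
          ((hs.smul continuous_const).add (hc.smul continuous_const))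
      source' := by
        apply Subtype.ext
        simp [Real.cos_zero, Real.sin_zero]
      target' := by
        apply Subtype.ext
        simp [Real.cos_two_pi, Real.sin_two_pi] } with hγpath
  have hWγ : ∀ s : unitInterval, W (γpath s) = Complex.exp (cc * (s : ℝ)) * W ⟨℧, h℧⟩ :=
    fun s => hrot (s : ℝ)
  -- iterated loops
  set pees : ℕ → Path (⟨℧, h℧⟩ : ↥P₀) ⟨℧, h℧⟩ :=
    fun k => Nat.rec γpath (fun _ ih => γpath.trans ih) k with hpees
  have hp0 : pees 0 = γpath := rfl
  have hpS : ∀ k, pees (k + 1) = γpath.trans (pees k) := fun k => rfl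
  -- lifts of W along the iterated loops
  have lifts : ∀ k : ℕ, ∃ h : unitInterval → ℂ, Continuous h ∧
      (∀ t : unitInterval, Complex.exp (h t) = W (pees k t)) ∧
      h 0 = z₀ ∧ h 1 = z₀ + ((k : ℂ) + 1) * cc := by
    intro k
    induction k with
    | zero =>
      refine ⟨fun t => z₀ + cc * ((t : ℝ) : ℂ), ?_, ?_, ?_, ?_⟩
      · exact continuous_const.add (continuous_const.mul
          (Complex.continuous_ofReal.comp continuous_subtype_val))
      · intro t
        rw [Complex.exp_add, hz₀, hp0, hWγ t]
        ring
      · simp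
      · simp only [Set.Icc.coe_one, Complex.ofReal_one, mul_one]
        ring
    | succ k ih =>
      obtain ⟨hk, hkc, hke, hk0, hk1⟩ := ih
      refine ⟨fun t => if (t : ℝ) ≤ 1 / 2 then z₀ + cc * ((2 * (t : ℝ) : ℝ) : ℂ)
        else hk (Set.projIcc (0 : ℝ) 1 zero_le_one (2 * (t : ℝ) - 1)) + cc, ?_, ?_, ?_, ?_⟩
      · apply Continuous.if_le
        · exact continuous_const.add (continuous_const.mul
            (Complex.continuous_ofReal.comp (continuous_const.mul continuous_subtype_val)))
        · exact (hkc.comp (continuous_projIcc.comp ((continuous_const.mul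
            continuous_subtype_val).sub continuous_const))).add continuous_const
        · exact continuous_subtype_val
        · exact continuous_const
        · intro t ht
          have hproj : Set.projIcc (0 : ℝ) 1 zero_le_one (2 * (t : ℝ) - 1) = 0 := by
            apply Subtype.ext
            rw [Set.coe_projIcc, ht]
            norm_num
          rw [hproj, hk0, ht]
          norm_num
      · intro t
        beta_reduce
        rw [hpS k, Path.trans_apply]
        by_cases ht : (t : ℝ) ≤ 1 / 2
        · rw [if_pos ht, dif_pos ht, Complex.exp_add, hz₀]
          have := hWγ ⟨2 * (t : ℝ), by constructor <;> [linarith [t.2.1]; linarith]⟩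
          rw [this]
          exact mul_comm _ _
        · rw [if_neg ht, dif_neg ht, Complex.exp_add, hexpcc, mul_one]
          push_neg at ht
          have hproj : Set.projIcc (0 : ℝ) 1 zero_le_one (2 * (t : ℝ) - 1)
              = ⟨2 * (t : ℝ) - 1, by constructor <;> [linarith; linarith [t.2.2]]⟩ :=
            Set.projIcc_of_mem _ ⟨by linarith, by linarith [t.2.2]⟩
          rw [hproj, hke]
      · beta_reduce
        have h0 : ((0 : unitInterval) : ℝ) = 0 := rfl
        rw [if_pos (by rw [h0]; norm_num : ((0 : unitInterval) : ℝ) ≤ 1 / 2)]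
        rw [h0]
        norm_num
      · beta_reduce
        have h1 : ((1 : unitInterval) : ℝ) = 1 := rfl
        rw [if_neg (by rw [h1]; norm_num : ¬ ((1 : unitInterval) : ℝ) ≤ 1 / 2)]
        have hproj : Set.projIcc (0 : ℝ) 1 zero_le_one (2 * ((1 : unitInterval) : ℝ) - 1)
            = 1 := by
          apply Subtype.ext
          rw [Set.coe_projIcc, h1]
          norm_num
        rw [hproj, hk1]
        push_cast
        ring
  -- the fundamental group element
  set g : FundamentalGroup (TopCat.of ↥P₀) (⟨℧, h℧⟩ : ↥P₀) :=
    FundamentalGroup.fromPath (X := TopCat.of ↥P₀)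
      (Quotient.mk (Path.Homotopic.setoid _ _) γpath) with hg
  have hmul : ∀ a b : FundamentalGroup (TopCat.of ↥P₀) (⟨℧, h℧⟩ : ↥P₀),
      (a * b).toArrow = b.toArrow ≫ a.toArrow := fun a b => rfl
  have hpow : ∀ j : ℕ, (g ^ (j + 1)).toArrow
      = Quotient.mk (Path.Homotopic.setoid _ _) (pees j) := by
    intro j
    induction j with
    | zero => rw [pow_one, hg]; rfl
    | succ j ihj =>
      rw [pow_succ, hmul, ihj, hg]
      rfl
  have key : ∀ m : ℕ, g ^ (m + 1) ≠ 1 := by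
    intro m hone
    have h1 : (Quotient.mk (Path.Homotopic.setoid (⟨℧, h℧⟩ : ↥P₀) ⟨℧, h℧⟩) (pees m))
        = Quotient.mk (Path.Homotopic.setoid _ _) (Path.refl (⟨℧, h℧⟩ : ↥P₀)) := by
      rw [← hpow m, hone]
      rfl
    obtain ⟨K⟩ := Quotient.exact h1
    have hKcont : Continuous fun q : unitInterval × unitInterval => K q := K.continuous
    have hsq : ∀ q : unitInterval × unitInterval, 0 < ε * D (K q) := by
      intro q
      rcases lt_trichotomy (ε * D (K q)) 0 with hlt | heq | hgt
      · exfalso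
        have hcont : Continuous fun r : unitInterval × unitInterval => ε * D (K r) :=
          continuous_const.mul (hDcont.comp hKcont)
        have hK11 : K (1, 1) = (⟨℧, h℧⟩ : ↥P₀) := by simpa using K.apply_one (1 : unitInterval)
        have hmem0 : (0 : ℝ) ∈ Set.Icc (ε * D (K q)) (ε * D (K ((1 : unitInterval), 1))) := by
          rw [hK11]
          exact ⟨hlt.le, hεD.le⟩
        obtain ⟨z, hz⟩ := intermediate_value_univ q (1, 1) hcont hmem0
        have hz' : ε * D (K z) = 0 := by simpa using hz
        rcases mul_eq_zero.mp hz' with h | h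
        · exact hεne h
        · exact hDne (K z) h
      · exfalso
        rcases mul_eq_zero.mp heq with h | h
        · exact hεne h
        · exact hDne (K q) h
      · exact hgt
    have hbot : ∀ s : unitInterval, (fun q : unitInterval × unitInterval => W (K q)) (s, 0)
        = Complex.exp z₀ := by
      intro s
      have hKs0 : K (s, 0) = (⟨℧, h℧⟩ : ↥P₀) := K.source s
      beta_reduce
      rw [hKs0, hz₀]
    obtain ⟨h2f, h2c, h2e, h2z⟩ := stmt13_lift_square (H := fun q => W (K q))
      (hWcont.comp hKcont) (fun q => hWne _ (hsq q)) hbot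
    obtain ⟨h1f, h1c, h1e, h10, h11⟩ := lifts m
    have hleft : h2f (0, 1) = h1f 1 := by
      have hc1 : Continuous fun t : unitInterval => h2f (0, t) :=
        h2c.comp (Continuous.prodMk_right 0)
      have hee : ∀ t : unitInterval, Complex.exp (h2f (0, t)) = Complex.exp (h1f t) := by
        intro t
        rw [h2e (0, t), h1e t]
        have hK0t : K (0, t) = pees m t := K.apply_zero t
        rw [hK0t]
      have ha : h2f ((0 : unitInterval), (0 : unitInterval)) = h1f 0 := by rw [h2z 0, h10]
      exact stmt13_aux_uniq (h₁ := fun t : unitInterval => h2f (0, t)) (h₂ := h1f)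
        hc1 h1c hee ha 1
    have hright : h2f (1, 1) = z₀ := by
      have hc1 : Continuous fun t : unitInterval => h2f (1, t) :=
        h2c.comp (Continuous.prodMk_right 1)
      have hee : ∀ t : unitInterval, Complex.exp (h2f (1, t))
          = Complex.exp ((fun _ : unitInterval => z₀) t) := by
        intro t
        rw [h2e (1, t)]
        have hK1t : K (1, t) = (⟨℧, h℧⟩ : ↥P₀) := by simpa using K.apply_one t
        rw [hK1t, hz₀]
      have ha : h2f ((1 : unitInterval), (0 : unitInterval)) = z₀ := h2z 1
      exact stmt13_aux_uniq (h₁ := fun t : unitInterval => h2f (1, t))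
        (h₂ := fun _ : unitInterval => z₀) hc1 continuous_const hee ha 1
    have htop : h2f (0, 1) = h2f (1, 1) := by
      have hthis := stmt13_aux_const (d := fun s : unitInterval => h2f (s, 1) - z₀)
        ((h2c.comp (continuous_id.prodMk continuous_const)).sub continuous_const)
        (by intro s
            rw [Complex.exp_sub, h2e (s, 1)]
            have hKs1 : K (s, 1) = (⟨℧, h℧⟩ : ↥P₀) := K.target s
            rw [hKs1, ← hz₀]
            exact div_self (Complex.exp_ne_zero z₀))
        0 1
      have h8 : h2f ((0 : unitInterval), 1) - z₀ = h2f (1, 1) - z₀ := hthis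
      exact sub_left_inj.mp h8
    have hfinal : z₀ + ((m : ℂ) + 1) * cc = z₀ := by rw [← h11, ← hleft, htop, hright]
    have h9 : ((m : ℂ) + 1) * cc = 0 := by
      have h10' := hfinal
      rwa [add_eq_left] at h10'
    rcases mul_eq_zero.mp h9 with h | h
    · exact Nat.cast_add_one_ne_zero m h
    · exact hccne h
  refine ⟨mem1, γpath, fun t => rfl, ?_⟩
  intro k hk
  show g ^ k ≠ 1
  cases k with
  | ofNat m =>
    have hm : m ≠ 0 := by simpa using hk
    obtain ⟨m', rfl⟩ := Nat.exists_eq_succ_of_ne_zero hm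
    rw [show (Int.ofNat (m' + 1)) = ((m' + 1 : ℕ) : ℤ) from rfl, zpow_natCast]
    exact key m'
  | negSucc m =>
    rw [zpow_negSucc]
    intro hone
    exact key m (inv_eq_one.mp hone)
end
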